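/- arXiv:2308.02127 — 5 statements merged into one kernel-verified Lean document; each statement's English description precedes it below -/
import Mathlib

section
/- For any complete graph K_n of order n ≥ 4, γ_tc(M(K_n)) = ⌈2n/3⌉. -/
open SimpleGraph

/-- The middle graph `M(G)`: vertices are `V(G) ⊕ E(G)`; an edge-vertex is adjacent to
another edge-vertex iff the edges are distinct and share an endpoint, and a vertex is
adjacent to an edge iff it is incident to it. -/
def middleGraph {V : Type*} (G : SimpleGraph V) : SimpleGraph (V ⊕ G.edgeSet) where
  Adj x y :=
    match x, y with
    | Sum.inl _, Sum.inl _ => False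
    | Sum.inl v, Sum.inr e => v ∈ (e : Sym2 V)
    | Sum.inr e, Sum.inl v => v ∈ (e : Sym2 V)
    | Sum.inr e, Sum.inr f => e ≠ f ∧ ∃ v, v ∈ (e : Sym2 V) ∧ v ∈ (f : Sym2 V)
  symm := by
    constructor
    rintro (v|e) (w|f) h
    · exact h
    · exact h
    · exact h
    · exact ⟨h.1.symm, h.2.imp fun v hv => ⟨hv.2, hv.1⟩⟩
  loopless := by
    constructor
    rintro (v|e) h
    · exact h
    · exact h.1 rfl

/-- `D` is a total dominating set of `G`: every vertex has a neighbour in `D`. -/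
def IsTotalDomSet {V : Type*} (G : SimpleGraph V) (D : Set V) : Prop :=
  ∀ v : V, ∃ u ∈ D, G.Adj v u

/-- `D` is a total outer-connected dominating set of `G`: it is total dominating and
the subgraph induced on the complement of `D` is connected. -/
def IsTOCDomSet {V : Type*} (G : SimpleGraph V) (D : Set V) : Prop :=
  IsTotalDomSet G D ∧ (G.induce Dᶜ).Connected

/-- The total domination number `γₜ(G)`. -/
noncomputable def totalDomNum {V : Type*} (G : SimpleGraph V) : ℕ :=
  sInf {k | ∃ D : Set V, IsTotalDomSet G D ∧ D.ncard = k}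

/-- The total outer-connected domination number `γ_tc(G)`. -/
noncomputable def tocDomNum {V : Type*} (G : SimpleGraph V) : ℕ :=
  sInf {k | ∃ D : Set V, IsTOCDomSet G D ∧ D.ncard = k}

/-- The set of leaves (vertices of degree 1) of `G`. -/
def leafSet {V : Type*} (G : SimpleGraph V) : Set V :=
  {v | ∃ u, G.neighborSet v = {u}}

/-- The wheel graph with hub `none` and rim cycle on `Fin n`. -/
def wheelGraph (n : ℕ) : SimpleGraph (Option (Fin n)) where
  Adj x y :=
    match x, y with
    | none, none => False
    | none, some _ => True
    | some _, none => True
    | some i, some j => (SimpleGraph.cycleGraph n).Adj i j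
  symm := by
    constructor
    rintro (_|i) (_|j) h
    · exact h
    · exact h
    · exact h
    · exact (SimpleGraph.cycleGraph n).symm.symm _ _ h
  loopless := by
    constructor
    rintro (_|i) h
    · exact h
    · exact (SimpleGraph.cycleGraph n).loopless.irrefl i h

/-- The corona `G ∘ K₁`: to each vertex `a` of `G` (copy `Sum.inl a`) a pendant
vertex `Sum.inr a` is attached. -/
def corona {V : Type*} (G : SimpleGraph V) : SimpleGraph (V ⊕ V) where
  Adj x y :=
    match x, y with
    | Sum.inl a, Sum.inl b => G.Adj a b
    | Sum.inl a, Sum.inr b => a = b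
    | Sum.inr a, Sum.inl b => a = b
    | Sum.inr _, Sum.inr _ => False
  symm := by
    constructor
    rintro (a|a) (b|b) h
    · exact G.symm.symm _ _ h
    · exact h.symm
    · exact h.symm
    · exact h
  loopless := by
    constructor
    rintro (a|a) h
    · exact G.loopless.irrefl a h
    · exact h

/-- The 2-corona `G ∘ P₂`: to each vertex `a` of `G` (copy `Sum.inl a`) a path
`Sum.inl a — Sum.inr (Sum.inl a) — Sum.inr (Sum.inr a)` of length 2 is attached. -/
def corona2 {V : Type*} (G : SimpleGraph V) : SimpleGraph (V ⊕ V ⊕ V) where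
  Adj x y :=
    match x, y with
    | Sum.inl a, Sum.inl b => G.Adj a b
    | Sum.inl a, Sum.inr (Sum.inl b) => a = b
    | Sum.inr (Sum.inl a), Sum.inl b => a = b
    | Sum.inr (Sum.inl a), Sum.inr (Sum.inr b) => a = b
    | Sum.inr (Sum.inr a), Sum.inr (Sum.inl b) => a = b
    | _, _ => False
  symm := by
    constructor
    rintro (a|a|a) (b|b|b) h <;> first | exact G.symm h | exact h.symm | exact h
  loopless := by
    constructor
    rintro (a|a|a) h
    · exact G.loopless.irrefl a h
    · exact h
    · exact h

/-- The spider `S_{1,n,n}`: hub `none`, middle vertices `some (.inl i)`,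
leaves `some (.inr i)`; the star `K_{1,n}` with every edge subdivided once. -/
def spiderGraph (n : ℕ) : SimpleGraph (Option (Fin n ⊕ Fin n)) where
  Adj x y :=
    match x, y with
    | none, some (Sum.inl _) => True
    | some (Sum.inl _), none => True
    | some (Sum.inl i), some (Sum.inr j) => i = j
    | some (Sum.inr i), some (Sum.inl j) => i = j
    | _, _ => False
  symm := by
    constructor
    rintro (_|i|i) (_|j|j) h <;> first | exact h.symm | exact h
  loopless := by
    constructor
    rintro (_|i|i) h <;> exact h

/-- The friendship graph `Fₙ`: `n` triangles sharing the common vertex `none`. -/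
def friendshipGraph (n : ℕ) : SimpleGraph (Option (Fin n × Fin 2)) where
  Adj x y :=
    match x, y with
    | none, some _ => True
    | some _, none => True
    | some (i, a), some (j, b) => i = j ∧ a ≠ b
    | none, none => False
  symm := by
    constructor
    rintro (_|⟨i,a⟩) (_|⟨j,b⟩) h <;> first | exact ⟨h.1.symm, h.2.symm⟩ | exact h
  loopless := by
    constructor
    rintro (_|⟨i,a⟩) h
    · exact h
    · exact h.2 rfl

namespace Stmt2Aux

def mm (n : ℕ) : ℕ := (2*n+2)/3
def cc (n : ℕ) : ℕ := n - 1 - mm n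
def jj (n i : ℕ) : ℕ := min ((3*i)/2) (i + cc n)

lemma jj_mono (n : ℕ) : StrictMono (jj n) := by
  apply strictMono_nat_of_lt_succ
  intro i; simp only [jj, cc, mm]; omega

lemma jj_step (n i : ℕ) : jj n (i+1) ≤ jj n i + 2 := by
  simp only [jj, cc, mm]; omega

lemma jj_zero (n : ℕ) : jj n 0 = 0 := by simp only [jj, cc, mm]; omega

lemma mm_ge (n : ℕ) (hn : 4 ≤ n) : 3 ≤ mm n := by simp only [mm]; omega

lemma jj_last (n : ℕ) (hn : 4 ≤ n) : jj n (mm n - 1) = n - 2 := by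
  simp only [jj, cc, mm]; omega

lemma jj_lt (n i : ℕ) (hn : 4 ≤ n) (hi : i < mm n) : jj n i + 1 ≤ n - 1 := by
  simp only [jj, cc, mm] at *; omega

lemma jj_partner (n i : ℕ) (hn : 4 ≤ n) (hi : i < mm n) :
    (i + 1 < mm n ∧ jj n (i+1) = jj n i + 1) ∨ (0 < i ∧ jj n i = jj n (i-1) + 1) := by
  simp only [jj, cc, mm] at *; omega

lemma jj_cover (n : ℕ) (hn : 4 ≤ n) : ∀ v, v < n → ∃ i, i < mm n ∧ (jj n i = v ∨ jj n i + 1 = v) := by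
  intro v
  induction v with
  | zero => intro _; exact ⟨0, by have := mm_ge n hn; omega, Or.inl (jj_zero n)⟩
  | succ v ih =>
    intro hv
    obtain ⟨i, him, hc⟩ := ih (by omega)
    rcases hc with h | h
    · exact ⟨i, him, Or.inr (by omega)⟩
    · by_cases hi1 : i + 1 < mm n
      · have h1 : jj n i < jj n (i+1) := jj_mono n (by omega)
        have h2 : jj n (i+1) ≤ jj n i + 2 := jj_step n i
        refine ⟨i+1, hi1, ?_⟩
        omega
      · exfalso
        have hmge := mm_ge n hn
        have hi' : i = mm n - 1 := by omega
        have h3 : jj n (mm n - 1) = n - 2 := jj_last n hn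
        rw [hi'] at h
        omega

variable (n : ℕ) (hn : 4 ≤ n)

/-- the i-th edge of the construction, as a Sym2 -/
def edg (i : ℕ) (hi : i < mm n) : (completeGraph (Fin n)).edgeSet :=
  ⟨s(⟨jj n i, by have := jj_lt n i hn hi; omega⟩, ⟨jj n i + 1, by have := jj_lt n i hn hi; omega⟩),
   by simp [completeGraph]⟩

def ff (i : Fin (mm n)) : (Fin n) ⊕ (completeGraph (Fin n)).edgeSet :=
  Sum.inr (edg n hn i.1 i.2)

def DD : Set ((Fin n) ⊕ (completeGraph (Fin n)).edgeSet) := Set.range (ff n hn)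

lemma ff_inj : Function.Injective (ff n hn) := by
  intro i i' h
  simp only [ff, edg, Sum.inr.injEq, Subtype.mk.injEq, Sym2.eq, Sym2.rel_iff',
    Prod.mk.injEq, Prod.swap_prod_mk, Fin.mk.injEq] at h
  have : jj n i.1 = jj n i'.1 := by omega
  exact Fin.ext ((jj_mono n).injective this)

lemma DD_ncard : (DD n hn).ncard = mm n := by
  have : DD n hn = (ff n hn) '' Set.univ := by simp [DD, Set.image_univ]
  rw [this, Set.ncard_image_of_injective _ (ff_inj n hn), Set.ncard_univ]
  simp

abbrev MK (n : ℕ) := middleGraph (completeGraph (Fin n))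

lemma mem_DD_iff (x) : x ∈ DD n hn ↔ ∃ i, ∃ hi : i < mm n, x = Sum.inr (edg n hn i hi) := by
  constructor
  · rintro ⟨i, rfl⟩; exact ⟨i.1, i.2, rfl⟩
  · rintro ⟨i, hi, rfl⟩; exact ⟨⟨i, hi⟩, rfl⟩

lemma inl_not_mem_DD (v : Fin n) : Sum.inl v ∉ DD n hn := by
  rintro ⟨i, h⟩; simp [ff] at h

lemma mem_edg_iff (i : ℕ) (hi : i < mm n) (v : Fin n) :
    v ∈ ((edg n hn i hi : (completeGraph (Fin n)).edgeSet) : Sym2 (Fin n)) ↔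
      (v.1 = jj n i ∨ v.1 = jj n i + 1) := by
  simp [edg, Sym2.mem_iff, Fin.ext_iff]

lemma DD_total : IsTotalDomSet (MK n) (DD n hn) := by
  rintro (v | e)
  · obtain ⟨i, hi, hc⟩ := jj_cover n hn v.1 v.2
    refine ⟨Sum.inr (edg n hn i hi), (mem_DD_iff n hn _).2 ⟨i, hi, rfl⟩, ?_⟩
    show v ∈ ((edg n hn i hi : _) : Sym2 (Fin n))
    rw [mem_edg_iff]
    omega
  · by_cases he : (Sum.inr e : Fin n ⊕ _) ∈ DD n hn
    · obtain ⟨i, hi, heq⟩ := (mem_DD_iff n hn _).1 he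
      obtain rfl : e = edg n hn i hi := by injection heq
      rcases jj_partner n i hn hi with ⟨hi1, hstep⟩ | ⟨hi0, hstep⟩
      · have hlt := jj_lt n i hn hi
        refine ⟨Sum.inr (edg n hn (i+1) hi1), (mem_DD_iff n hn _).2 ⟨_, _, rfl⟩, ?_⟩
        refine ⟨?_, ⟨jj n i + 1, by omega⟩, ?_, ?_⟩
        · intro hcon
          have := congrArg (fun (x : (completeGraph (Fin n)).edgeSet) =>
            (⟨jj n i, by have := jj_lt n i hn hi; omega⟩ : Fin n) ∈ (x : Sym2 (Fin n))) hcon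
          simp only [mem_edg_iff] at this
          have h1 := jj_mono n (Nat.lt_succ_self i)
          simp at this; omega
        · rw [mem_edg_iff]; exact Or.inr rfl
        · rw [mem_edg_iff]; exact Or.inl hstep.symm
      · have hi1 : i - 1 < mm n := by omega
        have hlt := jj_lt n i hn hi
        refine ⟨Sum.inr (edg n hn (i-1) hi1), (mem_DD_iff n hn _).2 ⟨_, _, rfl⟩, ?_⟩
        refine ⟨?_, ⟨jj n i, by omega⟩, ?_, ?_⟩
        · intro hcon
          have := congrArg (fun (x : (completeGraph (Fin n)).edgeSet) =>
            (⟨jj n i + 1, by have := jj_lt n i hn hi; omega⟩ : Fin n) ∈ (x : Sym2 (Fin n))) hcon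
          simp only [mem_edg_iff] at this
          have h1 : jj n (i-1) < jj n i := jj_mono n (by omega)
          simp at this; omega
        · rw [mem_edg_iff]; exact Or.inl rfl
        · rw [mem_edg_iff]; exact Or.inr hstep
    · obtain ⟨e, hes⟩ := e
      induction e using Sym2.ind with
      | _ a b =>
        have hab : a ≠ b := hes
        obtain ⟨i, hi, hc⟩ := jj_cover n hn a.1 a.2
        refine ⟨Sum.inr (edg n hn i hi), (mem_DD_iff n hn _).2 ⟨i, hi, rfl⟩, ?_⟩
        refine ⟨?_, a, by simp, ?_⟩
        · intro hcon
          exact he ((mem_DD_iff n hn _).2 ⟨i, hi, by rw [hcon]⟩)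
        · rw [mem_edg_iff]; omega


lemma edg_consec {e : (completeGraph (Fin n)).edgeSet}
    (he : (Sum.inr e : Fin n ⊕ _) ∈ DD n hn) (a b : Fin n)
    (hab : (e : Sym2 (Fin n)) = s(a,b)) : a.1 + 1 = b.1 ∨ b.1 + 1 = a.1 := by
  obtain ⟨i, hi, heq⟩ := (mem_DD_iff n hn _).1 he
  obtain rfl : e = edg n hn i hi := by injection heq
  simp only [edg, Sym2.eq, Sym2.rel_iff', Prod.mk.injEq, Prod.swap_prod_mk,
    Fin.ext_iff, Fin.val_mk] at hab
  omega

lemma reach_hop (a b : Fin n) (hab : a.1 + 2 ≤ b.1) :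
    ((MK n).induce (DD n hn)ᶜ).Reachable ⟨Sum.inl a, inl_not_mem_DD n hn a⟩
      ⟨Sum.inl b, inl_not_mem_DD n hn b⟩ := by
  have hne : a ≠ b := by intro h; rw [h] at hab; omega
  have hes : s(a,b) ∈ (completeGraph (Fin n)).edgeSet := by simpa using hne
  have hec : (Sum.inr (⟨s(a,b), hes⟩ : (completeGraph (Fin n)).edgeSet) : Fin n ⊕ _) ∈ (DD n hn)ᶜ := by
    intro hmem
    rcases edg_consec n hn hmem a b rfl with h | h <;> omega
  have h1 : ((MK n).induce (DD n hn)ᶜ).Adj ⟨Sum.inl a, inl_not_mem_DD n hn a⟩ ⟨Sum.inr ⟨s(a,b), hes⟩, hec⟩ := by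
    show (MK n).Adj (Sum.inl a) (Sum.inr ⟨s(a,b), hes⟩)
    show a ∈ (⟨s(a,b), hes⟩ : (completeGraph (Fin n)).edgeSet).1
    simp
  have h2 : ((MK n).induce (DD n hn)ᶜ).Adj ⟨Sum.inr ⟨s(a,b), hes⟩, hec⟩ ⟨Sum.inl b, inl_not_mem_DD n hn b⟩ := by
    show (MK n).Adj (Sum.inr ⟨s(a,b), hes⟩) (Sum.inl b)
    show b ∈ (⟨s(a,b), hes⟩ : (completeGraph (Fin n)).edgeSet).1
    simp
  exact h1.reachable.trans h2.reachable

lemma reach_zero (v : Fin n) :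
    ((MK n).induce (DD n hn)ᶜ).Reachable ⟨Sum.inl v, inl_not_mem_DD n hn v⟩
      ⟨Sum.inl ⟨0, by omega⟩, inl_not_mem_DD n hn _⟩ := by
  by_cases h2 : 2 ≤ v.1
  · exact (reach_hop n hn ⟨0, by omega⟩ v (by simpa using h2)).symm
  · by_cases h0 : v.1 = 0
    · have : v = ⟨0, by omega⟩ := Fin.ext h0
      rw [this]
    · have h1 : v.1 = 1 := by omega
      have r1 := reach_hop n hn v ⟨3, by omega⟩ (by simp [h1])
      have r2 := reach_hop n hn ⟨0, by omega⟩ ⟨3, by omega⟩ (by simp)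
      exact r1.trans r2.symm

lemma DD_conn : ((MK n).induce (DD n hn)ᶜ).Connected := by
  rw [connected_iff]
  constructor
  · have key : ∀ (x : Fin n ⊕ (completeGraph (Fin n)).edgeSet) (hx : x ∈ (DD n hn)ᶜ),
        ((MK n).induce (DD n hn)ᶜ).Reachable ⟨x, hx⟩
          ⟨Sum.inl ⟨0, by omega⟩, inl_not_mem_DD n hn _⟩ := by
      rintro (v | e) hx
      · exact reach_zero n hn v
      · obtain ⟨e, hes⟩ := e
        induction e using Sym2.ind with
        | _ a b =>
          have h1 : ((MK n).induce (DD n hn)ᶜ).Adj ⟨Sum.inr ⟨s(a,b), hes⟩, hx⟩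
              ⟨Sum.inl a, inl_not_mem_DD n hn a⟩ := by
            show (MK n).Adj (Sum.inr ⟨s(a,b), hes⟩) (Sum.inl a)
            show a ∈ (⟨s(a,b), hes⟩ : (completeGraph (Fin n)).edgeSet).1
            simp
          exact h1.reachable.trans (reach_zero n hn a)
    rintro ⟨x, hx⟩ ⟨y, hy⟩
    exact (key x hx).trans (key y hy).symm
  · exact ⟨⟨Sum.inl ⟨0, by omega⟩, inl_not_mem_DD n hn _⟩⟩

include hn in
lemma lower_bound (D : Set (Fin n ⊕ (completeGraph (Fin n)).edgeSet))
    (htot : IsTotalDomSet (MK n) D) : (2*n+2)/3 ≤ D.ncard := by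
  classical
  haveI : NeZero n := ⟨by omega⟩
  haveI : Fintype ((completeGraph (Fin n)).edgeSet : Set (Sym2 (Fin n))) := Fintype.ofFinite _
  haveI : Fintype D := Fintype.ofFinite _
  let F : Finset (completeGraph (Fin n)).edgeSet :=
    Finset.univ.filter (fun e => (Sum.inr e : Fin n ⊕ _) ∈ D)
  let W : Finset (Fin n) := Finset.univ.filter (fun v => (Sum.inl v : Fin n ⊕ _) ∈ D)
  let deg : Fin n → ℕ :=
    fun v => (F.filter (fun e : (completeGraph (Fin n)).edgeSet => v ∈ (e : Sym2 (Fin n)))).card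
  have hmemF : ∀ e, e ∈ F ↔ (Sum.inr e : Fin n ⊕ _) ∈ D := by
    intro e; simp [F]
  have hmemW : ∀ v, v ∈ W ↔ (Sum.inl v : Fin n ⊕ _) ∈ D := by
    intro v; simp [W]
  -- (1) F.card + W.card ≤ D.ncard
  have h1 : F.card + W.card ≤ D.ncard := by
    rw [Set.ncard_eq_toFinset_card' D]
    have hdisj : Disjoint (F.image (Sum.inr : _ → Fin n ⊕ (completeGraph (Fin n)).edgeSet))
        (W.image (Sum.inl : Fin n → Fin n ⊕ (completeGraph (Fin n)).edgeSet)) := by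
      rw [Finset.disjoint_left]
      rintro x hx hy
      simp only [Finset.mem_image] at hx hy
      obtain ⟨e, -, rfl⟩ := hx
      obtain ⟨v, -, h⟩ := hy
      exact Sum.inl_ne_inr h
    have hsub : (F.image (Sum.inr : _ → Fin n ⊕ (completeGraph (Fin n)).edgeSet)
        ∪ W.image Sum.inl) ⊆ D.toFinset := by
      intro x hx
      simp only [Finset.mem_union, Finset.mem_image] at hx
      rcases hx with ⟨e, he, rfl⟩ | ⟨v, hv, rfl⟩
      · simpa using (hmemF e).1 he
      · simpa using (hmemW v).1 hv
    calc F.card + W.card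
        = ((F.image (Sum.inr : _ → Fin n ⊕ (completeGraph (Fin n)).edgeSet)
            ∪ W.image Sum.inl)).card := by
          rw [Finset.card_union_of_disjoint hdisj,
            Finset.card_image_of_injective _ Sum.inr_injective,
            Finset.card_image_of_injective _ Sum.inl_injective]
      _ ≤ D.toFinset.card := Finset.card_le_card hsub
  -- (2) sum of degrees
  have h2 : ∑ v : Fin n, deg v = 2 * F.card := by
    have hcomm : ∑ v : Fin n, deg v
        = ∑ e ∈ F, (Finset.univ.filter (fun v : Fin n => v ∈ (e : Sym2 (Fin n)))).card := by
      simp only [deg, Finset.card_filter]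
      rw [Finset.sum_comm]
    rw [hcomm]
    have htwo : ∀ e ∈ F,
        (Finset.univ.filter (fun v : Fin n => v ∈ (e : Sym2 (Fin n)))).card = 2 := by
      rintro ⟨e, hes⟩ -
      induction e using Sym2.ind with
      | _ a b =>
        have hab : a ≠ b := hes
        have hset : Finset.univ.filter
            (fun v : Fin n => v ∈ ((⟨s(a,b), hes⟩ : (completeGraph (Fin n)).edgeSet) : Sym2 (Fin n)))
            = {a, b} := by
          ext v; simp [Sym2.mem_iff]
        rw [hset, Finset.card_insert_of_notMem (by simpa using hab), Finset.card_singleton]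
    rw [Finset.sum_congr rfl htwo, Finset.sum_const, smul_eq_mul, mul_comm]
  -- (3) each degree positive
  have h3 : ∀ v : Fin n, 1 ≤ deg v := by
    intro v
    obtain ⟨u, hu, hadj⟩ := htot (Sum.inl v)
    rcases u with w | e
    · cases hadj
    · have hv : v ∈ (e : Sym2 (Fin n)) := hadj
      have hin : e ∈ F.filter (fun e : (completeGraph (Fin n)).edgeSet => v ∈ (e : Sym2 (Fin n))) :=
        Finset.mem_filter.2 ⟨(hmemF e).2 hu, hv⟩
      exact Finset.card_pos.2 ⟨e, hin⟩
  -- (4) degree split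
  let V2 : Finset (Fin n) := Finset.univ.filter (fun v => 2 ≤ deg v)
  have h4 : V2.card + (Finset.univ.filter (fun v => ¬ 2 ≤ deg v)).card = n := by
    rw [Finset.card_filter_add_card_filter_not]
    simp
  have h5 : (Finset.univ.filter (fun v => ¬ 2 ≤ deg v)).card
      ≤ ∑ v ∈ Finset.univ.filter (fun v => ¬ 2 ≤ deg v), deg v := by
    calc (Finset.univ.filter (fun v => ¬ 2 ≤ deg v)).card
        = ∑ _v ∈ Finset.univ.filter (fun v => ¬ 2 ≤ deg v), 1 := by simp
      _ ≤ _ := Finset.sum_le_sum (fun i _ => h3 i)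
  have h6 : 2 * V2.card ≤ ∑ v ∈ V2, deg v := by
    calc 2 * V2.card = ∑ _v ∈ V2, 2 := by rw [Finset.sum_const, smul_eq_mul, mul_comm]
      _ ≤ _ := Finset.sum_le_sum (fun i hi => by
          simp only [V2, Finset.mem_filter] at hi; exact hi.2)
  have h7 : (∑ v ∈ V2, deg v) + ∑ v ∈ Finset.univ.filter (fun v => ¬ 2 ≤ deg v), deg v
      = 2 * F.card := by
    rw [← h2]
    exact Finset.sum_filter_add_sum_filter_not _ _ _
  -- (5) isolated edges
  let isol : (completeGraph (Fin n)).edgeSet → Prop := fun e => ∀ f ∈ F, f ≠ e → ∀ v : Fin n,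
    ¬(v ∈ (e : Sym2 (Fin n)) ∧ v ∈ (f : Sym2 (Fin n)))
  have h8 : (F.filter (fun e => ¬ isol e)).card ≤ ∑ v ∈ V2, deg v := by
    have hsub : F.filter (fun e => ¬ isol e)
        ⊆ V2.biUnion (fun v => F.filter
          (fun e : (completeGraph (Fin n)).edgeSet => v ∈ (e : Sym2 (Fin n)))) := by
      intro e he
      simp only [Finset.mem_filter, isol] at he
      push_neg at he
      obtain ⟨heF, f, hfF, hfe, v, hve, hvf⟩ := he
      have hpair : ({f, e} : Finset (completeGraph (Fin n)).edgeSet)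
          ⊆ F.filter (fun e : (completeGraph (Fin n)).edgeSet => v ∈ (e : Sym2 (Fin n))) := by
        intro x hx
        simp only [Finset.mem_insert, Finset.mem_singleton] at hx
        rcases hx with rfl | rfl
        · exact Finset.mem_filter.2 ⟨hfF, hvf⟩
        · exact Finset.mem_filter.2 ⟨heF, hve⟩
      have hv2 : v ∈ V2 := by
        simp only [V2, Finset.mem_filter, Finset.mem_univ, true_and]
        calc 2 = ({f, e} : Finset (completeGraph (Fin n)).edgeSet).card := by
              rw [Finset.card_insert_of_notMem (by simpa using hfe), Finset.card_singleton]
          _ ≤ _ := Finset.card_le_card hpair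
      exact Finset.mem_biUnion.2 ⟨v, hv2, Finset.mem_filter.2 ⟨heF, hve⟩⟩
    calc (F.filter (fun e => ¬ isol e)).card ≤ _ := Finset.card_le_card hsub
      _ ≤ ∑ v ∈ V2, deg v := Finset.card_biUnion_le
  have h9 : (F.filter (fun e => isol e)).card + (F.filter (fun e => ¬ isol e)).card = F.card :=
    Finset.card_filter_add_card_filter_not _
  -- (6) isolated edges mapped injectively into W
  have h10 : (F.filter (fun e => isol e)).card ≤ W.card := by
    have hspec : ∀ e ∈ F.filter (fun e => isol e), ∃ w, w ∈ W ∧ w ∈ (e : Sym2 (Fin n)) := by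
      intro e he
      have heF := (Finset.mem_filter.1 he).1
      have hiso : isol e := (Finset.mem_filter.1 he).2
      obtain ⟨u, hu, hadj⟩ := htot (Sum.inr e)
      rcases u with w | f
      · exact ⟨w, (hmemW w).2 hu, hadj⟩
      · obtain ⟨hef, v, hve, hvf⟩ := hadj
        exact ((hiso f ((hmemF f).2 hu) (Ne.symm hef) v) ⟨hve, hvf⟩).elim
    choose! wf hwf1 hwf2 using hspec
    apply Finset.card_le_card_of_injOn wf (fun e he => hwf1 e he)
    intro e1 he1 e2 he2 hw
    by_contra hne
    have he1' := Finset.mem_filter.1 he1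
    have he2' := Finset.mem_filter.1 he2
    exact he1'.2 e2 he2'.1 (Ne.symm hne) (wf e1)
      ⟨hwf2 e1 he1, hw ▸ hwf2 e2 he2⟩
  omega

end Stmt2Aux

theorem stmt2 (n : ℕ) (hn : 4 ≤ n) :
    tocDomNum (middleGraph (completeGraph (Fin n))) = (2 * n + 2) / 3 := by
  have hmem : (2 * n + 2) / 3 ∈ {k | ∃ D : Set (Fin n ⊕ (completeGraph (Fin n)).edgeSet),
      IsTOCDomSet (middleGraph (completeGraph (Fin n))) D ∧ D.ncard = k} :=
    ⟨Stmt2Aux.DD n hn, ⟨Stmt2Aux.DD_total n hn, Stmt2Aux.DD_conn n hn⟩, Stmt2Aux.DD_ncard n hn⟩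
  refine le_antisymm (Nat.sInf_le hmem) (le_csInf ⟨_, hmem⟩ ?_)
  rintro k ⟨D, ⟨htot, -⟩, rfl⟩
  exact Stmt2Aux.lower_bound n hn D htot
end

section
/- Let T be a tree of order n ≥ 4. Then γ_tc(M(T)) = 2n − 2 if and only if T is isomorphic to the star K_{1,n−1}. -/
open SimpleGraph

/-! ### Auxiliary lemmas -/

section Aux

variable {V : Type*}

/-- `T` is a star with centre `c`. -/
def IsStarAt (T : SimpleGraph V) (c : V) : Prop :=
  ∀ u v : V, T.Adj u v ↔ (u = c ∧ v ≠ c) ∨ (v = c ∧ u ≠ c)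

lemma no_adj_eq {W : Type*} {G : SimpleGraph W} (h : ∀ x y : W, ¬ G.Adj x y)
    (hc : G.Connected) (x y : W) : x = y := by
  obtain ⟨p⟩ := hc.preconnected x y
  cases p with
  | nil => rfl
  | cons h' _ => exact absurd h' (h _ _)

lemma induce_singleton_connected {W : Type*} (G : SimpleGraph W) (a : W) :
    (G.induce {a}).Connected := by
  haveI : Nonempty ({a} : Set W) := ⟨⟨a, rfl⟩⟩
  refine ⟨fun x y => ?_⟩
  have hxy : x = y := Subtype.ext (x.2.trans y.2.symm)
  exact hxy ▸ Reachable.refl x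

lemma induce_pair_connected {W : Type*} {G : SimpleGraph W} {a b : W} (hab : G.Adj a b) :
    (G.induce {a, b}).Connected := by
  have ha : a ∈ ({a, b} : Set W) := Or.inl rfl
  have hb : b ∈ ({a, b} : Set W) := Or.inr rfl
  have hadj : (G.induce {a, b}).Adj ⟨a, ha⟩ ⟨b, hb⟩ := hab
  haveI : Nonempty ({a, b} : Set W) := ⟨⟨a, ha⟩⟩
  refine ⟨fun x y => ?_⟩
  have key : ∀ z : ({a, b} : Set W), z = ⟨a, ha⟩ ∨ z = ⟨b, hb⟩ := by
    rintro ⟨z, hz | hz⟩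
    · left; exact Subtype.ext hz
    · right; exact Subtype.ext hz
  rcases key x with rfl | rfl <;> rcases key y with rfl | rfl
  · exact Reachable.refl _
  · exact hadj.reachable
  · exact hadj.symm.reachable
  · exact Reachable.refl _

lemma exists_adj_of_ne {T : SimpleGraph V} (hc : T.Connected) {v w : V} (hvw : v ≠ w) :
    ∃ u, T.Adj v u := by
  obtain ⟨p⟩ := hc.preconnected v w
  cases p with
  | nil => exact absurd rfl hvw
  | cons h _ => exact ⟨_, h⟩

lemma walk_closure {T : SimpleGraph V} {c : V}
    (hN : ∀ w, T.Adj c w → ∀ x, T.Adj w x → x = c)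
    {u v : V} (p : T.Walk u v) (hu : u = c ∨ T.Adj c u) : v = c ∨ T.Adj c v := by
  induction p with
  | nil => exact hu
  | cons h q ih =>
    apply ih
    rcases hu with rfl | hadj
    · right; exact h
    · left; exact hN _ hadj _ h

lemma walk_pair {T : SimpleGraph V} {x y : V}
    (hx : ∀ w, T.Adj x w → w = y) (hy : ∀ w, T.Adj y w → w = x)
    {u v : V} (p : T.Walk u v) (hu : u = x ∨ u = y) : v = x ∨ v = y := by
  induction p with
  | nil => exact hu
  | cons h q ih =>
    apply ih
    rcases hu with rfl | rfl
    · right; exact hx _ h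
    · left; exact hy _ h

lemma star_of_two_neighbors {T : SimpleGraph V} (hc : T.Connected)
    {a b y' : V} (hab : T.Adj a b) (hay : T.Adj a y') (hne : y' ≠ b)
    (hcon : ∀ u v, T.Adj u v → (∃ y, T.Adj u y ∧ y ≠ v) → ∀ z, T.Adj v z → z = u) :
    IsStarAt T a := by
  have hN : ∀ w, T.Adj a w → ∀ x, T.Adj w x → x = a := by
    intro w hw x hx
    have hother : ∃ y, T.Adj a y ∧ y ≠ w := by
      by_cases h : w = b
      · exact ⟨y', hay, h ▸ hne⟩
      · exact ⟨b, hab, fun hbw => h hbw.symm⟩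
    exact hcon a w hw hother x hx
  have hall : ∀ v : V, v = a ∨ T.Adj a v := fun v => by
    obtain ⟨p⟩ := hc.preconnected a v
    exact walk_closure hN p (Or.inl rfl)
  intro u v
  constructor
  · intro huv
    by_cases hu : u = a
    · subst hu; exact Or.inl ⟨rfl, huv.ne'⟩
    · rcases hall u with h | h
      · exact absurd h hu
      · exact Or.inr ⟨hN u h v huv, hu⟩
  · rintro (⟨rfl, hv⟩ | ⟨rfl, hu⟩)
    · rcases hall v with h | h
      · exact absurd h hv
      · exact h
    · rcases hall u with h | h
      · exact absurd h hu
      · exact h.symm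

lemma exists_strong_edge [Fintype V] {T : SimpleGraph V} (hconn : T.Connected)
    (hn : 3 ≤ Fintype.card V) (hstar : ¬ ∃ c, IsStarAt T c) :
    ∃ u v, T.Adj u v ∧ (∃ y, T.Adj u y ∧ y ≠ v) ∧ (∃ z, T.Adj v z ∧ z ≠ u) := by
  by_contra hcontra
  push_neg at hcontra
  have hcon : ∀ u v, T.Adj u v → (∃ y, T.Adj u y ∧ y ≠ v) → ∀ z, T.Adj v z → z = u := by
    intro u v huv hy
    exact hcontra u v huv hy
  -- get an edge
  obtain ⟨x, y, hxy⟩ := Fintype.exists_pair_of_one_lt_card (α := V) (by omega)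
  obtain ⟨a, hab'⟩ := exists_adj_of_ne hconn hxy
  set b := a with hb
  clear hb
  -- T.Adj x a
  by_cases hA : ∃ y', T.Adj x y' ∧ y' ≠ a
  · obtain ⟨y', h1, h2⟩ := hA
    exact hstar ⟨x, star_of_two_neighbors hconn hab' h1 h2 hcon⟩
  · push_neg at hA
    by_cases hB : ∃ z', T.Adj a z' ∧ z' ≠ x
    · obtain ⟨z', h1, h2⟩ := hB
      exact hstar ⟨a, star_of_two_neighbors hconn hab'.symm h1 h2 hcon⟩
    · push_neg at hB
      -- every vertex is x or a
      have hall : ∀ v : V, v = x ∨ v = a := fun v => by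
        obtain ⟨p⟩ := hconn.preconnected x v
        exact walk_pair hA hB p (Or.inl rfl)
      have : (Set.univ : Set V).ncard ≤ ({x, a} : Set V).ncard := by
        apply Set.ncard_le_ncard _ (Set.toFinite _)
        intro v _
        rcases hall v with rfl | rfl
        · exact Or.inl rfl
        · exact Or.inr rfl
      rw [Set.ncard_univ, Nat.card_eq_fintype_card] at this
      have h2 : ({x, a} : Set V).ncard ≤ 2 :=
        (Set.ncard_insert_le _ _).trans (by simp)
      omega


lemma isStarAt_of_iso {n : ℕ} {T : SimpleGraph V}
    (φ : T ≃g completeBipartiteGraph (Fin 1) (Fin n)) :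
    ∃ c, IsStarAt T c := by
  refine ⟨φ.symm (Sum.inl 0), fun u v => ?_⟩
  have key : ∀ w : V, ((φ w).isLeft = true) ↔ w = φ.symm (Sum.inl 0) := by
    intro w
    constructor
    · intro h
      cases hw : φ w with
      | inl i =>
        have h0 : φ w = Sum.inl 0 := by rw [hw]; congr 1; exact Subsingleton.elim _ _
        have := congrArg φ.symm h0
        simpa using this
      | inr j => rw [hw] at h; simp at h
    · rintro rfl
      have h0 : φ (φ.symm (Sum.inl 0)) = Sum.inl 0 := φ.apply_symm_apply _
      rw [h0]; rfl
  have keyR : ∀ w : V, ((φ w).isRight = true) ↔ ¬ (w = φ.symm (Sum.inl 0)) := by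
    intro w
    rw [← key w]
    cases φ w <;> simp
  rw [← φ.map_rel_iff]
  simp only [completeBipartiteGraph_adj, key, keyR]
  tauto

lemma nonempty_iso_of_isStarAt [Fintype V] {T : SimpleGraph V} {c : V} (h : IsStarAt T c) :
    Nonempty (T ≃g completeBipartiteGraph (Fin 1) (Fin (Fintype.card V - 1))) := by
  classical
  have hcard : Fintype.card {v : V // v ≠ c} = Fintype.card V - 1 := by
    rw [Fintype.card_subtype_compl, Fintype.card_subtype_eq]
  let e2 : {v : V // v ≠ c} ≃ Fin (Fintype.card V - 1) := Fintype.equivFinOfCardEq hcard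
  refine ⟨⟨⟨fun v => if hv : v = c then Sum.inl 0 else Sum.inr (e2 ⟨v, hv⟩),
    Sum.elim (fun _ => c) (fun j => (e2.symm j).1), ?_, ?_⟩, ?_⟩⟩
  · intro v
    by_cases hv : v = c
    · subst hv; simp
    · simp [hv]
  · rintro (i | j)
    · simp [Subsingleton.elim i 0]
    · have hj : (e2.symm j).1 ≠ c := (e2.symm j).2
      simp [hj]
  · intro u v
    rw [h u v]
    by_cases hu : u = c <;> by_cases hv : v = c <;>
      simp [hu, hv, completeBipartiteGraph_adj]

lemma card_middle [Fintype V] {T : SimpleGraph V} (hT : T.IsTree) :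
    Nat.card (V ⊕ T.edgeSet) = 2 * Fintype.card V - 1 := by
  classical
  haveI : Fintype T.edgeSet := Fintype.ofFinite _
  have h := hT.card_edgeFinset
  rw [SimpleGraph.edgeFinset_card] at h
  rw [Nat.card_eq_fintype_card, Fintype.card_sum]
  omega

lemma toc_remove_one [Fintype V] {T : SimpleGraph V} (hT : T.Connected)
    (hn : 2 ≤ Fintype.card V) (v0 : V) :
    IsTOCDomSet (middleGraph T) {Sum.inl v0}ᶜ ∧
      ({(Sum.inl v0 : V ⊕ T.edgeSet)}ᶜ : Set (V ⊕ T.edgeSet)).ncard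
        = Nat.card (V ⊕ T.edgeSet) - 1 := by
  classical
  refine ⟨⟨?_, ?_⟩, ?_⟩
  · rintro (v | f)
    · obtain ⟨w, hw⟩ := Fintype.exists_ne_of_one_lt_card (by omega) v
      obtain ⟨t, ht⟩ := exists_adj_of_ne hT (Ne.symm hw)
      exact ⟨Sum.inr ⟨s(v, t), ht⟩, by simp, Sym2.mem_mk_left _ _⟩
    · obtain ⟨f, hf⟩ := f
      induction f using Sym2.ind with
      | _ a b =>
        have hab : T.Adj a b := hf
        by_cases ha : a = v0
        · have hb : b ≠ v0 := fun hb => hab.ne (ha.trans hb.symm)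
          exact ⟨Sum.inl b, by simp [hb], Sym2.mem_mk_right _ _⟩
        · exact ⟨Sum.inl a, by simp [ha], Sym2.mem_mk_left _ _⟩
  · have h := induce_singleton_connected (middleGraph T) (Sum.inl v0 : V ⊕ T.edgeSet)
    rwa [← compl_compl ({(Sum.inl v0 : V ⊕ T.edgeSet)} : Set (V ⊕ T.edgeSet))] at h
  · have h := Set.ncard_add_ncard_compl ({(Sum.inl v0 : V ⊕ T.edgeSet)} : Set (V ⊕ T.edgeSet))
    rw [Set.ncard_singleton] at h
    omega

lemma toc_remove_pair [Fintype V] {T : SimpleGraph V} (hT : T.Connected)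
    {u v y z : V} (huv : T.Adj u v) (huy : T.Adj u y) (hyv : y ≠ v)
    (hvz : T.Adj v z) (hzu : z ≠ u) :
    ∃ D : Set (V ⊕ T.edgeSet), IsTOCDomSet (middleGraph T) D ∧
      D.ncard = Nat.card (V ⊕ T.edgeSet) - 2 := by
  classical
  refine ⟨{Sum.inl u, Sum.inr ⟨s(u, v), huv⟩}ᶜ, ⟨?_, ?_⟩, ?_⟩
  · rintro (w | f)
    · by_cases hw : w = u
      · have hne : s(u, y) ≠ s(u, v) := by
          intro hcontra
          rw [Sym2.eq_iff] at hcontra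
          rcases hcontra with ⟨-, h⟩ | ⟨h, -⟩
          · exact hyv h
          · exact huv.ne h
        subst hw
        exact ⟨Sum.inr ⟨s(w, y), huy⟩, by simp [Subtype.ext_iff, hne],
          Sym2.mem_mk_left _ _⟩
      · by_cases hwv : w = v
        · have hne : s(v, z) ≠ s(u, v) := by
            intro hcontra
            rw [Sym2.eq_iff] at hcontra
            rcases hcontra with ⟨h, -⟩ | ⟨-, h⟩
            · exact huv.ne h.symm
            · exact hzu h
          subst hwv
          exact ⟨Sum.inr ⟨s(w, z), hvz⟩, by simp [Subtype.ext_iff, hne],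
            Sym2.mem_mk_left _ _⟩
        · obtain ⟨t, ht⟩ := exists_adj_of_ne hT hw
          have hne : s(w, t) ≠ s(u, v) := by
            intro hcontra
            rw [Sym2.eq_iff] at hcontra
            rcases hcontra with ⟨h, -⟩ | ⟨h, -⟩
            · exact hw h
            · exact hwv h
          exact ⟨Sum.inr ⟨s(w, t), ht⟩, by simp [Subtype.ext_iff, hne],
            Sym2.mem_mk_left _ _⟩
    · obtain ⟨f, hf⟩ := f
      induction f using Sym2.ind with
      | _ a b =>
        have hab : T.Adj a b := hf
        by_cases ha : a = u
        · have hb : b ≠ u := fun hb => hab.ne (ha.trans hb.symm)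
          exact ⟨Sum.inl b, by simp [hb], Sym2.mem_mk_right _ _⟩
        · exact ⟨Sum.inl a, by simp [ha], Sym2.mem_mk_left _ _⟩
  · have hadj : (middleGraph T).Adj (Sum.inl u) (Sum.inr ⟨s(u, v), huv⟩) :=
      Sym2.mem_mk_left _ _
    have h := induce_pair_connected hadj
    rwa [← compl_compl ({Sum.inl u, Sum.inr ⟨s(u, v), huv⟩} :
      Set (V ⊕ T.edgeSet))] at h
  · have hne : (Sum.inl u : V ⊕ T.edgeSet) ≠ Sum.inr ⟨s(u, v), huv⟩ := by simp
    have h := Set.ncard_add_ncard_compl ({Sum.inl u, Sum.inr ⟨s(u, v), huv⟩} :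
      Set (V ⊕ T.edgeSet))
    rw [Set.ncard_pair hne] at h
    omega

lemma toc_lb_star [Fintype V] {T : SimpleGraph V} {c : V} (hstar : IsStarAt T c)
    {D : Set (V ⊕ T.edgeSet)} (hD : IsTOCDomSet (middleGraph T) D) :
    Nat.card (V ⊕ T.edgeSet) - 1 ≤ D.ncard := by
  classical
  have huniq : ∀ f : Sym2 V, f ∈ T.edgeSet → ∀ w : V, w ∈ f → w ≠ c → f = s(c, w) := by
    intro f
    induction f using Sym2.ind with
    | _ a b =>
      intro hf w hmem hwc
      rcases (hstar a b).mp hf with ⟨rfl, hb⟩ | ⟨rfl, ha⟩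
      · rcases Sym2.mem_iff.mp hmem with rfl | rfl
        · exact absurd rfl hwc
        · rfl
      · rcases Sym2.mem_iff.mp hmem with rfl | rfl
        · exact Sym2.eq_swap
        · exact absurd rfl hwc
  have hwit : ∀ f : Sym2 V, f ∈ T.edgeSet → ∃ w, w ∈ f ∧ w ≠ c := by
    intro f
    induction f using Sym2.ind with
    | _ a b =>
      intro hf
      rcases (hstar a b).mp hf with ⟨rfl, hb⟩ | ⟨rfl, ha⟩
      · exact ⟨b, Sym2.mem_mk_right _ _, hb⟩
      · exact ⟨a, Sym2.mem_mk_left _ _, ha⟩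
  have hedges : ∀ f : T.edgeSet, Sum.inr f ∈ D := by
    rintro ⟨f, hf⟩
    obtain ⟨w, hwmem, hwc⟩ := hwit f hf
    obtain ⟨d, hdD, hadj⟩ := hD.1 (Sum.inl w)
    cases d with
    | inl x => exact (hadj : False).elim
    | inr g =>
      have hg : (g : Sym2 V) = s(c, w) := huniq g g.2 w hadj hwc
      have hfw : f = s(c, w) := huniq f hf w hwmem hwc
      have : g = ⟨f, hf⟩ := Subtype.ext (hg.trans hfw.symm)
      exact this ▸ hdD
  have hempty : ∀ x y : ↑(Dᶜ), ¬ ((middleGraph T).induce Dᶜ).Adj x y := by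
    rintro ⟨(x | ex), hx⟩ ⟨(y | ey), hy⟩ hadj
    · exact hadj
    · exact hy (hedges ey)
    · exact hx (hedges ex)
    · exact hx (hedges ex)
  have hsub : ∀ a ∈ Dᶜ, ∀ b ∈ Dᶜ, a = b := fun a ha b hb =>
    congrArg Subtype.val (no_adj_eq hempty hD.2 ⟨a, ha⟩ ⟨b, hb⟩)
  have h1 : Dᶜ.ncard ≤ 1 := (Set.ncard_le_one (Set.toFinite _)).mpr hsub
  have h := Set.ncard_add_ncard_compl D
  omega

end Aux

theorem stmt8 {V : Type*} [Fintype V] (T : SimpleGraph V) (hT : T.IsTree)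
    (hn : 4 ≤ Fintype.card V) :
    tocDomNum (middleGraph T) = 2 * Fintype.card V - 2 ↔
      Nonempty (T ≃g completeBipartiteGraph (Fin 1) (Fin (Fintype.card V - 1))) := by
  classical
  have hcard := card_middle hT
  constructor
  · intro hval
    by_contra hiso
    have hnostar : ¬ ∃ c, IsStarAt T c := by
      rintro ⟨c, hc⟩
      exact hiso (nonempty_iso_of_isStarAt hc)
    obtain ⟨u, v, huv, ⟨y, huy, hyv⟩, ⟨z, hvz, hzu⟩⟩ :=
      exists_strong_edge hT.isConnected (by omega) hnostar
    obtain ⟨D, hD, hDcard⟩ := toc_remove_pair hT.isConnected huv huy hyv hvz hzu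
    have hle : tocDomNum (middleGraph T) ≤ 2 * Fintype.card V - 3 :=
      Nat.sInf_le ⟨D, hD, by omega⟩
    omega
  · rintro ⟨φ⟩
    obtain ⟨c, hc⟩ := isStarAt_of_iso φ
    obtain ⟨hD, hDcard⟩ := toc_remove_one hT.isConnected (by omega) c
    apply le_antisymm
    · exact Nat.sInf_le ⟨_, hD, by omega⟩
    · refine le_csInf ⟨_, _, hD, rfl⟩ ?_
      rintro k ⟨D', hD', rfl⟩
      have := toc_lb_star hc hD'
      omega
end

section
/- For any path P_n of order n ≥ 4, γ_tc(M(P_n)) = 2n − 4. -/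
open SimpleGraph

namespace Stmt10aux

abbrev MV (n : ℕ) := Fin n ⊕ ((SimpleGraph.pathGraph n).edgeSet : Set (Sym2 (Fin n)))
abbrev M (n : ℕ) := middleGraph (SimpleGraph.pathGraph n)

def ev (n i : ℕ) (h : i + 1 < n) : (SimpleGraph.pathGraph n).edgeSet :=
  ⟨s(⟨i, Nat.lt_of_succ_lt h⟩, ⟨i+1, h⟩), by
    rw [SimpleGraph.mem_edgeSet, SimpleGraph.pathGraph_adj]; left; rfl⟩

lemma mem_ev {n i : ℕ} (h : i + 1 < n) (v : Fin n) :
    v ∈ ((ev n i h : (SimpleGraph.pathGraph n).edgeSet) : Sym2 (Fin n)) ↔ v.val = i ∨ v.val = i + 1 := by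
  simp [ev, Sym2.mem_iff, Fin.ext_iff]

lemma ev_surj {n : ℕ} (e : (SimpleGraph.pathGraph n).edgeSet) :
    ∃ i h, e = ev n i h := by
  obtain ⟨s, hs⟩ := e
  induction s using Sym2.ind with
  | _ u v =>
    rw [SimpleGraph.mem_edgeSet, SimpleGraph.pathGraph_adj] at hs
    rcases hs with hs | hs
    · refine ⟨u.val, by omega, ?_⟩
      apply Subtype.ext
      have hv : v = ⟨u.val + 1, by omega⟩ := Fin.ext hs.symm
      simp only [ev]
      exact congrArg (fun w => s(u, w)) hv
    · refine ⟨v.val, by omega, ?_⟩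
      apply Subtype.ext
      have hu : u = ⟨v.val + 1, by omega⟩ := Fin.ext hs.symm
      simp only [ev]
      rw [Sym2.eq_swap]
      exact congrArg (fun w => s(v, w)) hu

lemma ev_inj {n i j : ℕ} (h : i + 1 < n) (h' : j + 1 < n)
    (heq : ev n i h = ev n j h') : i = j := by
  have h1 : (⟨i, by omega⟩ : Fin n) ∈ ((ev n i h : (SimpleGraph.pathGraph n).edgeSet) : Sym2 (Fin n)) :=
    (mem_ev h _).2 (Or.inl rfl)
  have h2 : (⟨j, by omega⟩ : Fin n) ∈ ((ev n j h' : (SimpleGraph.pathGraph n).edgeSet) : Sym2 (Fin n)) :=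
    (mem_ev h' _).2 (Or.inl rfl)
  rw [heq] at h1
  rw [← heq] at h2
  have := (mem_ev h' _).1 h1
  have := (mem_ev h _).1 h2
  simp at *
  omega

lemma card_edgeSet (n : ℕ) (hn : 1 ≤ n) :
    Nat.card ((SimpleGraph.pathGraph n).edgeSet) = n - 1 := by
  have : Nat.card (Fin (n-1)) = Nat.card ((SimpleGraph.pathGraph n).edgeSet) := by
    apply Nat.card_eq_of_bijective (fun i => ev n i.val (by omega))
    constructor
    · intro a b hab
      exact Fin.ext (ev_inj _ _ hab)
    · intro e
      obtain ⟨i, hi, rfl⟩ := ev_surj e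
      exact ⟨⟨i, by omega⟩, rfl⟩
  rw [Nat.card_eq_fintype_card (α := Fin (n-1)), Fintype.card_fin] at this
  omega

lemma card_MV (n : ℕ) (hn : 1 ≤ n) : Nat.card (MV n) = 2 * n - 1 := by
  rw [Nat.card_sum, card_edgeSet n hn]
  simp
  omega

end Stmt10aux


namespace Stmt10aux

lemma adj_inl_inr {n : ℕ} (v : Fin n) (e : (SimpleGraph.pathGraph n).edgeSet) :
    (M n).Adj (Sum.inl v) (Sum.inr e) ↔ v ∈ (e : Sym2 (Fin n)) := Iff.rfl

lemma adj_inr_inl {n : ℕ} (v : Fin n) (e : (SimpleGraph.pathGraph n).edgeSet) :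
    (M n).Adj (Sum.inr e) (Sum.inl v) ↔ v ∈ (e : Sym2 (Fin n)) := Iff.rfl

lemma adj_inr_inr {n : ℕ} (e f : (SimpleGraph.pathGraph n).edgeSet) :
    (M n).Adj (Sum.inr e) (Sum.inr f) ↔
      e ≠ f ∧ ∃ v, v ∈ (e : Sym2 (Fin n)) ∧ v ∈ (f : Sym2 (Fin n)) := Iff.rfl

lemma not_adj_inl_inl {n : ℕ} (v w : Fin n) : ¬ (M n).Adj (Sum.inl v) (Sum.inl w) :=
  fun h => h

lemma adj_ev_ev {n i j : ℕ} (h : i + 1 < n) (h' : j + 1 < n) (hij : j = i + 1) :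
    (M n).Adj (Sum.inr (ev n i h)) (Sum.inr (ev n j h')) := by
  rw [adj_inr_inr]
  constructor
  · intro hc; have := ev_inj h h' hc; omega
  · exact ⟨⟨i + 1, h⟩, (mem_ev h _).2 (Or.inr rfl), (mem_ev h' _).2 (by simp; omega)⟩

lemma upper (n : ℕ) (hn : 4 ≤ n) :
    ∃ D : Set (MV n), IsTOCDomSet (M n) D ∧ D.ncard = 2 * n - 4 := by
  have h1 : (1:ℕ) + 1 < n := by omega
  have h2 : (2:ℕ) + 1 < n := by omega
  have h0 : (0:ℕ) + 1 < n := by omega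
  set C : Set (MV n) :=
    {Sum.inl ⟨1, by omega⟩, Sum.inl ⟨2, by omega⟩, Sum.inr (ev n 1 h1)} with hC
  have hmem : ∀ x : MV n, x ≠ Sum.inl ⟨1, by omega⟩ → x ≠ Sum.inl ⟨2, by omega⟩ →
      x ≠ Sum.inr (ev n 1 h1) → x ∈ Cᶜ := by
    intro x hx1 hx2 hx3
    simp [hC, hx1, hx2, hx3]
  have hmem_inr : ∀ (i : ℕ) (h : i + 1 < n), i ≠ 1 → (Sum.inr (ev n i h) : MV n) ∈ Cᶜ := by
    intro i h hi
    refine hmem _ (by simp) (by simp) ?_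
    intro hc
    exact hi (ev_inj h h1 (Sum.inr.inj hc))
  have hmem_inl : ∀ v : Fin n, v.val ≠ 1 → v.val ≠ 2 → (Sum.inl v : MV n) ∈ Cᶜ := by
    intro v hv1 hv2
    refine hmem _ ?_ ?_ (by simp)
    · intro hc; exact hv1 (congrArg Fin.val (Sum.inl.inj hc))
    · intro hc; exact hv2 (congrArg Fin.val (Sum.inl.inj hc))
  refine ⟨Cᶜ, ⟨?_, ?_⟩, ?_⟩
  · rintro (v | e)
    · by_cases hv1 : v.val = 1
      · refine ⟨Sum.inr (ev n 0 h0), hmem_inr 0 h0 (by omega), ?_⟩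
        rw [adj_inl_inr, mem_ev]; omega
      · by_cases hv2 : v.val = 2
        · refine ⟨Sum.inr (ev n 2 h2), hmem_inr 2 h2 (by omega), ?_⟩
          rw [adj_inl_inr, mem_ev]; omega
        · by_cases hlast : v.val + 1 < n
          · refine ⟨Sum.inr (ev n v.val hlast), hmem_inr _ hlast hv1, ?_⟩
            rw [adj_inl_inr, mem_ev]; omega
          · have hvn : v.val + 1 = n := by have := v.isLt; omega
            have hh : (v.val - 1) + 1 < n := by omega
            refine ⟨Sum.inr (ev n (v.val - 1) hh), hmem_inr _ hh (by omega), ?_⟩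
            rw [adj_inl_inr, mem_ev]; omega
    · obtain ⟨i, hi, rfl⟩ := ev_surj e
      by_cases hi0 : i = 0
      · subst hi0
        refine ⟨Sum.inl ⟨0, by omega⟩, hmem_inl _ (by simp) (by simp), ?_⟩
        rw [adj_inr_inl, mem_ev]; simp
      · by_cases hi1 : i = 1
        · subst hi1
          refine ⟨Sum.inr (ev n 0 h0), hmem_inr 0 h0 (by omega), ?_⟩
          exact ((M n).adj_symm (adj_ev_ev h0 hi rfl))
        · by_cases hi2 : i = 2
          · subst hi2
            refine ⟨Sum.inl ⟨3, by omega⟩, hmem_inl _ (by simp) (by simp), ?_⟩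
            rw [adj_inr_inl, mem_ev]; simp
          · refine ⟨Sum.inl ⟨i, by omega⟩, hmem_inl _ (by simpa using hi1) (by simpa using hi2), ?_⟩
            rw [adj_inr_inl, mem_ev]; simp
  · rw [compl_compl]
    have hae : (Sum.inr (ev n 1 h1) : MV n) ∈ C := by simp [hC]
    have hr : ∀ z (hz : z ∈ C),
        ((M n).induce C).Reachable ⟨z, hz⟩ ⟨Sum.inr (ev n 1 h1), hae⟩ := by
      intro z hz
      have hz' := hz
      rw [hC] at hz'
      simp only [Set.mem_insert_iff, Set.mem_singleton_iff] at hz'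
      rcases hz' with rfl | rfl | rfl
      · refine SimpleGraph.Adj.reachable ?_
        show (M n).Adj (Sum.inl ⟨1, by omega⟩) (Sum.inr (ev n 1 h1))
        rw [adj_inl_inr, mem_ev]; simp
      · refine SimpleGraph.Adj.reachable ?_
        show (M n).Adj (Sum.inl ⟨2, by omega⟩) (Sum.inr (ev n 1 h1))
        rw [adj_inl_inr, mem_ev]; simp
      · exact SimpleGraph.Reachable.refl _
    rw [SimpleGraph.connected_iff]
    refine ⟨?_, ⟨⟨Sum.inr (ev n 1 h1), hae⟩⟩⟩
    intro a b
    exact (hr a.1 a.2).trans (hr b.1 b.2).symm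
  · have hC3 : C.ncard = 3 := by
      rw [hC]
      rw [Set.ncard_insert_of_notMem (by simp [Fin.ext_iff]),
        Set.ncard_insert_of_notMem (by simp), Set.ncard_singleton]
    have := Set.ncard_add_ncard_compl C
    have := card_MV n (by omega)
    omega

end Stmt10aux


namespace Stmt10aux

lemma lower (n : ℕ) (hn : 4 ≤ n) (D : Set (MV n)) (hD : IsTOCDomSet (M n) D) :
    2 * n - 4 ≤ D.ncard := by
  have hcard := Set.ncard_add_ncard_compl D
  have hMV := card_MV n (by omega)
  suffices h : Dᶜ.ncard ≤ 3 by omega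
  have claimA : ∀ (i : ℕ) (h : i + 1 < n) (h2 : i + 1 + 1 < n),
      Sum.inr (ev n i h) ∈ Dᶜ → Sum.inr (ev n (i+1) h2) ∈ Dᶜ → False := by
    intro i h h2 hc1 hc2
    obtain ⟨u, hu, hadj⟩ := hD.1 (Sum.inl ⟨i + 1, by omega⟩)
    rcases u with w | e
    · exact not_adj_inl_inl _ _ hadj
    · obtain ⟨j, hj, rfl⟩ := ev_surj e
      rw [adj_inl_inr, mem_ev] at hadj
      replace hadj : i + 1 = j ∨ i + 1 = j + 1 := hadj
      rcases hadj with hj1 | hj1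
      · subst hj1
        exact hc2 hu
      · have hji : j = i := by omega
        subst hji
        exact hc1 hu
  by_cases hE : ∃ e : (SimpleGraph.pathGraph n).edgeSet, Sum.inr e ∈ Dᶜ
  · obtain ⟨e, he⟩ := hE
    obtain ⟨i, hi, rfl⟩ := ev_surj e
    set S : Set (MV n) :=
      {Sum.inl ⟨i, by omega⟩, Sum.inl ⟨i + 1, hi⟩, Sum.inr (ev n i hi)} with hS
    have key : ∀ x y : MV n, y ∈ Dᶜ → (M n).Adj x y → x ∈ S → y ∈ S := by
      intro x y hy hadj hxS
      simp only [hS, Set.mem_insert_iff, Set.mem_singleton_iff] at hxS ⊢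
      rcases hxS with rfl | rfl | rfl
      · rcases y with w | f
        · exact absurd hadj (not_adj_inl_inl _ _)
        · obtain ⟨j, hj, rfl⟩ := ev_surj f
          rw [adj_inl_inr, mem_ev] at hadj
          replace hadj : i = j ∨ i = j + 1 := hadj
          rcases hadj with rfl | hji
          · right; right; rfl
          · exfalso
            subst hji
            exact claimA j hj hi hy he
      · rcases y with w | f
        · exact absurd hadj (not_adj_inl_inl _ _)
        · obtain ⟨j, hj, rfl⟩ := ev_surj f
          rw [adj_inl_inr, mem_ev] at hadj
          replace hadj : i + 1 = j ∨ i + 1 = j + 1 := hadj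
          rcases hadj with hji | hji
          · exfalso
            subst hji
            exact claimA i hi hj he hy
          · have : j = i := by omega
            subst this
            right; right; rfl
      · rcases y with w | f
        · rw [adj_inr_inl, mem_ev] at hadj
          rcases hadj with h1 | h1
          · left; exact congrArg Sum.inl (Fin.ext h1)
          · right; left; exact congrArg Sum.inl (Fin.ext h1)
        · obtain ⟨j, hj, rfl⟩ := ev_surj f
          rw [adj_inr_inr] at hadj
          obtain ⟨hne, v, hv1, hv2⟩ := hadj
          rw [mem_ev] at hv1 hv2
          have hij : i ≠ j := by
            intro hq; subst hq; exact hne rfl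
          have : j = i + 1 ∨ i = j + 1 := by omega
          rcases this with hji | hji
          · exfalso
            subst hji
            exact claimA i hi hj he hy
          · exfalso
            subst hji
            exact claimA j hj hi hy he
    have walkS : ∀ (a b : ↥(Dᶜ)) (w : ((M n).induce Dᶜ).Walk a b),
        (a : MV n) ∈ S → (b : MV n) ∈ S := by
      intro a b w
      induction w with
      | nil => exact id
      | @cons a' c b' hadj p ih =>
        intro ha
        exact ih (key _ _ c.2 hadj ha)
    have hCsub : Dᶜ ⊆ S := by
      intro x hx
      obtain ⟨w⟩ := hD.2.preconnected ⟨Sum.inr (ev n i hi), he⟩ ⟨x, hx⟩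
      exact walkS _ _ w (by simp [hS])
    have hS3 : S.ncard ≤ 3 := by
      have a := Set.ncard_insert_le (Sum.inl (⟨i, by omega⟩ : Fin n))
        ({Sum.inl ⟨i + 1, hi⟩, Sum.inr (ev n i hi)} : Set (MV n))
      have b := Set.ncard_insert_le (Sum.inl (⟨i + 1, hi⟩ : Fin n))
        ({Sum.inr (ev n i hi)} : Set (MV n))
      have c := Set.ncard_singleton (Sum.inr (ev n i hi) : MV n)
      rw [hS]
      omega
    exact le_trans (Set.ncard_le_ncard hCsub (Set.toFinite S)) hS3
  · push_neg at hE
    have hsub : (Dᶜ : Set (MV n)).Subsingleton := by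
      intro a ha b hb
      obtain ⟨w⟩ := hD.2.preconnected ⟨a, ha⟩ ⟨b, hb⟩
      have hnil : ∀ (x y : ↥(Dᶜ)) (w : ((M n).induce Dᶜ).Walk x y), x = y := by
        intro x y w
        induction w with
        | nil => rfl
        | @cons x' c y' hadj p ih =>
          exfalso
          obtain ⟨(v | e), hx⟩ := x'
          · obtain ⟨(v' | e'), hc⟩ := c
            · exact not_adj_inl_inl v v' hadj
            · exact hE e' hc
          · exact hE e hx
      exact congrArg Subtype.val (hnil _ _ w)
    rcases hsub.eq_empty_or_singleton with hq | ⟨x, hq⟩ <;> rw [hq] <;> simp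

end Stmt10aux

theorem stmt10 (n : ℕ) (hn : 4 ≤ n) :
    tocDomNum (middleGraph (SimpleGraph.pathGraph n)) = 2 * n - 4 := by
  obtain ⟨D, hD, hDcard⟩ := Stmt10aux.upper n hn
  apply le_antisymm
  · exact Nat.sInf_le ⟨D, hD, hDcard⟩
  · refine le_csInf ⟨_, D, hD, hDcard⟩ ?_
    rintro k ⟨D', hD', rfl⟩
    exact Stmt10aux.lower n hn D' hD'
end

section
/- Let T be a tree of order n ≥ 4 with diameter 2 or 3. Then γ_tc(M(T)) = 2·|Leaf(T)|. -/
open SimpleGraph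

namespace TOCAux

variable {V : Type*} {T : SimpleGraph V}

lemma leaf_adj {l u x : V} (h : T.neighborSet l = {u}) (hx : T.Adj l x) : x = u := by
  have : x ∈ T.neighborSet l := hx
  rw [h] at this; exact this

lemma leaf_adj_self {l u : V} (h : T.neighborSet l = {u}) : T.Adj l u := by
  have : u ∈ T.neighborSet l := by rw [h]; rfl
  exact this

lemma path_length_le_dist (hT : T.IsTree) {x y : V} (p : T.Walk x y) (hp : p.IsPath) :
    p.length ≤ T.dist x y := by
  obtain ⟨q, hq, hlen⟩ := (hT.isConnected.preconnected x y).exists_path_of_dist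
  rw [← hlen, (hT.existsUnique_path x y).unique hp hq]

lemma no_triangle (hT : T.IsTree) {a b c : V} (hab : T.Adj a b) (hbc : T.Adj b c)
    (hac : T.Adj a c) : False := by
  have h1 : (Walk.cons hac Walk.nil : T.Walk a c).IsPath := by simp [hac.ne]
  have h2 : (Walk.cons hab (Walk.cons hbc Walk.nil) : T.Walk a c).IsPath := by
    simp [hab.ne, hbc.ne, hac.ne]
  have := (hT.existsUnique_path a c).unique h1 h2
  simpa using congrArg Walk.length this

lemma exists_extension (hT : T.IsTree) {a b : V} (p : T.Walk a b) (hp : p.IsPath)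
    (hlen : 1 ≤ p.length) (ha : a ∉ leafSet T) :
    ∃ x, ∃ _h : T.Adj x a, x ∉ p.support := by
  classical
  have hadj1 : T.Adj a (p.getVert 1) := by
    have := p.adj_getVert_succ (i := 0) (by omega)
    simpa [p.getVert_zero] using this
  have hex : ∃ x ∈ T.neighborSet a, x ≠ p.getVert 1 := by
    by_contra h
    push_neg at h
    exact ha ⟨p.getVert 1, Set.eq_singleton_iff_unique_mem.mpr ⟨hadj1, h⟩⟩
  obtain ⟨x, hx, hxne⟩ := hex
  have hx' : T.Adj a x := hx
  refine ⟨x, hx'.symm, fun hmem => ?_⟩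
  have hxa : x ≠ a := fun h => T.loopless.irrefl a (h ▸ hx')
  have htu : (p.takeUntil x hmem).IsPath := hp.takeUntil hmem
  have hedge : (Walk.cons hx' Walk.nil : T.Walk a x).IsPath := by simp [hxa.symm]
  have heq := (hT.existsUnique_path a x).unique htu hedge
  have hspec := p.take_spec hmem
  rw [heq] at hspec
  simp only [Walk.cons_append, Walk.nil_append] at hspec
  have := congrArg (fun w : T.Walk a b => w.getVert 1) hspec
  simp only [Walk.getVert_cons_succ, Walk.getVert_zero] at this
  exact hxne this

lemma internal_adj (hT : T.IsTree) (hediam : T.ediam ≠ ⊤) (hdiam : T.diam ≤ 3)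
    {a b : V} (ha : a ∉ leafSet T) (hb : b ∉ leafSet T) (hab : a ≠ b) : T.Adj a b := by
  by_contra hnadj
  obtain ⟨q, hq, -⟩ := (hT.isConnected.preconnected a b).exists_path_of_dist
  have hq0 : q.length ≠ 0 := fun h => hab (Walk.eq_of_length_eq_zero h)
  have hq1 : q.length ≠ 1 := by
    intro h
    apply hnadj
    have := q.adj_getVert_succ (i := 0) (by omega)
    rw [q.getVert_zero] at this
    have h2 : q.getVert 1 = b := by rw [← h]; exact q.getVert_length
    rwa [h2] at this
  obtain ⟨x, hxadj, hxs⟩ := exists_extension hT q hq (by omega) ha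
  have hp₁ : (Walk.cons hxadj q).IsPath := hq.cons hxs
  have hp₁' : (Walk.cons hxadj q).reverse.IsPath := hp₁.reverse
  obtain ⟨y, hyadj, hys⟩ := exists_extension hT (Walk.cons hxadj q).reverse hp₁'
    (by simp only [Walk.length_reverse, Walk.length_cons]; omega) hb
  have hp₂ : (Walk.cons hyadj (Walk.cons hxadj q).reverse).IsPath := hp₁'.cons hys
  have hlen : 4 ≤ (Walk.cons hyadj (Walk.cons hxadj q).reverse).length := by
    simp only [Walk.length_cons, Walk.length_reverse]; omega
  have h1 := path_length_le_dist hT _ hp₂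
  have h2 := T.dist_le_diam hediam (u := y) (v := x)
  omega

end TOCAux

namespace TOCAux
variable {V : Type*} {T : SimpleGraph V}

lemma leaf_pair_absurd (hT : T.IsTree) {l u w : V} (hl : T.neighborSet l = {u})
    (hu : T.neighborSet u = {l}) (hwl : w ≠ l) (hwu : w ≠ u) : False := by
  obtain ⟨p, hp, -⟩ := (hT.isConnected.preconnected l w).exists_path_of_dist
  cases p with
  | nil => exact hwl rfl
  | @cons _ v₁ _ h q =>
    have hv₁ : v₁ = u := leaf_adj hl h
    subst hv₁
    cases q with
    | nil => exact hwu rfl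
    | @cons _ v₂ _ h2 q2 =>
      have hv₂ : v₂ = l := leaf_adj hu h2
      subst hv₂
      rw [Walk.cons_isPath_iff] at hp
      exact hp.2 (by simp [Walk.support_cons])

lemma leaves_not_adj [Fintype V] (hT : T.IsTree) (hcard : 4 ≤ Fintype.card V)
    {l u : V} (hl : l ∈ leafSet T) (hu : u ∈ leafSet T) (hadj : T.Adj l u) : False := by
  classical
  obtain ⟨a, ha⟩ := hl
  obtain ⟨b, hb⟩ := hu
  have hau : u = a := leaf_adj ha hadj
  have hbl : l = b := leaf_adj hb hadj.symm
  subst hau; subst hbl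
  have hex : ∃ w : V, w ≠ l ∧ w ≠ u := by
    by_contra h
    push_neg at h
    have hsub : (Finset.univ : Finset V) ⊆ {l, u} := by
      intro x _
      by_cases hx : x = l
      · simp [hx]
      · simp [h x hx]
    have h1 := Finset.card_le_card hsub
    have h2 : ({l, u} : Finset V).card ≤ 2 :=
      (Finset.card_insert_le _ _).trans (by simp)
    rw [Finset.card_univ] at h1
    omega
  obtain ⟨w, hwl, hwu⟩ := hex
  exact leaf_pair_absurd hT ha hb hwl hwu

lemma internal_nonempty [Fintype V] (hT : T.IsTree) (hcard : 4 ≤ Fintype.card V) :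
    ∃ c, c ∉ leafSet T := by
  by_contra h
  push_neg at h
  have hne : Nonempty V := Fintype.card_pos_iff.mp (by omega)
  obtain ⟨v⟩ := hne
  obtain ⟨u, hu⟩ := h v
  exact leaves_not_adj hT hcard (h v) (h u) (leaf_adj_self hu)

lemma exists_adj [Fintype V] (hT : T.IsTree) (hcard : 4 ≤ Fintype.card V) (v : V) :
    ∃ w, T.Adj v w := by
  have : Nontrivial V := Fintype.one_lt_card_iff_nontrivial.mp (by omega)
  obtain ⟨u, hu⟩ := exists_ne v
  obtain ⟨p⟩ := hT.isConnected.preconnected v u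
  have h0 : p.length ≠ 0 := fun h => hu (Walk.eq_of_length_eq_zero h).symm
  have := p.adj_getVert_succ (i := 0) (by omega)
  rw [p.getVert_zero] at this
  exact ⟨_, this⟩

lemma internal_leaf_nbr [Fintype V] (hT : T.IsTree) (hcard : 4 ≤ Fintype.card V)
    (hediam : T.ediam ≠ ⊤) (hdiam : T.diam ≤ 3) {v : V} (hv : v ∉ leafSet T) :
    ∃ l, T.neighborSet l = {v} ∧ l ∈ leafSet T := by
  obtain ⟨w, hw⟩ := exists_adj hT hcard v
  by_cases hwl : w ∈ leafSet T
  · obtain ⟨z, hz⟩ := hwl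
    have hvz : v = z := leaf_adj hz hw.symm
    exact ⟨w, by rw [hz, hvz], ⟨z, hz⟩⟩
  · have hex : ∃ x ∈ T.neighborSet v, x ≠ w := by
      by_contra h
      push_neg at h
      exact hv ⟨w, Set.eq_singleton_iff_unique_mem.mpr ⟨hw, h⟩⟩
    obtain ⟨x, hx, hxw⟩ := hex
    have hx' : T.Adj v x := hx
    by_cases hxl : x ∈ leafSet T
    · obtain ⟨z, hz⟩ := hxl
      have hvz : v = z := leaf_adj hz hx'.symm
      exact ⟨x, by rw [hz, hvz], ⟨z, hz⟩⟩
    · have hadjwx : T.Adj w x := internal_adj hT hediam hdiam hwl hxl (Ne.symm hxw)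
      exact absurd (no_triangle hT hw hadjwx hx') id

lemma pendant_edge_eq {l v : V} (hl : T.neighborSet l = {v}) {e : Sym2 V}
    (he : e ∈ T.edgeSet) (hle : l ∈ e) : e = s(l, v) := by
  induction e using Sym2.ind with
  | _ x y =>
    rw [Sym2.mem_iff] at hle
    rw [SimpleGraph.mem_edgeSet] at he
    rcases hle with rfl | rfl
    · have hy : y = v := leaf_adj hl he
      rw [hy]
    · have hx : x = v := leaf_adj hl he.symm
      rw [hx, Sym2.eq_swap]

lemma internal_cases [Fintype V] (hT : T.IsTree) (hcard : 4 ≤ Fintype.card V)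
    (hediam : T.ediam ≠ ⊤) (hdiam : T.diam ≤ 3) :
    (∃ c, c ∉ leafSet T ∧ ∀ x, x ∉ leafSet T → x = c) ∨
    (∃ c d, T.Adj c d ∧ c ∉ leafSet T ∧ d ∉ leafSet T ∧
      ∀ x, x ∉ leafSet T → x = c ∨ x = d) := by
  obtain ⟨c, hc⟩ := internal_nonempty hT hcard
  by_cases h : ∀ x, x ∉ leafSet T → x = c
  · exact Or.inl ⟨c, hc, h⟩
  · push_neg at h
    obtain ⟨d, hd, hdc⟩ := h
    refine Or.inr ⟨c, d, internal_adj hT hediam hdiam hc hd (Ne.symm hdc), hc, hd, ?_⟩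
    intro x hx
    by_contra hxx
    push_neg at hxx
    obtain ⟨hxc, hxd⟩ := hxx
    exact no_triangle hT (internal_adj hT hediam hdiam hx hc hxc)
      (internal_adj hT hediam hdiam hc hd (Ne.symm hdc))
      (internal_adj hT hediam hdiam hx hd hxd)

end TOCAux

theorem stmt12 {V : Type*} [Fintype V] (T : SimpleGraph V) (hT : T.IsTree)
    (hn : 4 ≤ Fintype.card V) (hdiam1 : 2 ≤ T.diam) (hdiam2 : T.diam ≤ 3) :
    tocDomNum (middleGraph T) = 2 * (leafSet T).ncard := by
  classical
  have hediam : T.ediam ≠ ⊤ := by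
    intro h
    have h0 : T.diam = 0 := by rw [SimpleGraph.diam, h]; rfl
    omega
  haveI : Finite T.edgeSet := Subtype.finite
  have hNEV : Nonempty V := Fintype.card_pos_iff.mp (by omega)
  obtain ⟨v0⟩ := hNEV
  obtain ⟨w0, hw0⟩ := TOCAux.exists_adj hT hn v0
  haveI hNE : Nonempty T.edgeSet := ⟨⟨s(v0, w0), T.mem_edgeSet.mpr hw0⟩⟩
  have hfex : ∀ l ∈ leafSet T, ∃ e : T.edgeSet, l ∈ (e : Sym2 V) ∧
      ∀ e' : T.edgeSet, l ∈ (e' : Sym2 V) → e' = e := by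
    intro l hl
    obtain ⟨u, hu⟩ := hl
    refine ⟨⟨s(l, u), T.mem_edgeSet.mpr (TOCAux.leaf_adj_self hu)⟩, Sym2.mem_mk_left l u, ?_⟩
    intro e' he'
    exact Subtype.ext (TOCAux.pendant_edge_eq hu e'.2 he')
  choose! f hf1 hf2 using hfex
  set Pend : Set T.edgeSet := {e | ∃ l ∈ leafSet T, l ∈ (e : Sym2 V)} with hPendDef
  have hPend : Pend = f '' leafSet T := by
    ext e
    constructor
    · rintro ⟨l, hl, hle⟩
      exact ⟨l, hl, (hf2 l hl e hle).symm⟩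
    · rintro ⟨l, hl, rfl⟩
      exact ⟨l, hl, hf1 l hl⟩
  have hfinj : Set.InjOn f (leafSet T) := by
    intro l1 h1 l2 h2 he
    obtain ⟨u, hu⟩ := id h1
    have hval := TOCAux.pendant_edge_eq hu (f l1).2 (hf1 l1 h1)
    have hm : l2 ∈ ((f l1 : T.edgeSet) : Sym2 V) := he ▸ hf1 l2 h2
    rw [hval, Sym2.mem_iff] at hm
    rcases hm with rfl | rfl
    · rfl
    · exact (TOCAux.leaves_not_adj hT hn h1 h2 (TOCAux.leaf_adj_self hu)).elim
  have hPcard : Pend.ncard = (leafSet T).ncard := by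
    rw [hPend, Set.ncard_image_of_injOn hfinj]
  set D : Set (V ⊕ T.edgeSet) := (Sum.inl '' leafSet T) ∪ (Sum.inr '' Pend) with hDdef
  have hmemD1 : ∀ v : V, Sum.inl v ∈ D ↔ v ∈ leafSet T := by
    intro v; simp [hDdef]
  have hmemD2 : ∀ e : T.edgeSet, Sum.inr e ∈ D ↔ e ∈ Pend := by
    intro e; simp [hDdef, Subtype.ext_iff]
  have hDcard : D.ncard = 2 * (leafSet T).ncard := by
    rw [hDdef, Set.ncard_union_eq (by
        rw [Set.disjoint_left]
        rintro z ⟨a, _, rfl⟩ ⟨b, _, hb⟩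
        simp at hb) (Set.toFinite _) (Set.toFinite _),
      Set.ncard_image_of_injective _ Sum.inl_injective,
      Set.ncard_image_of_injective _ Sum.inr_injective, hPcard]
    ring
  -- total domination of D
  have htot : IsTotalDomSet (middleGraph T) D := by
    rintro (v | e)
    · by_cases hv : v ∈ leafSet T
      · refine ⟨Sum.inr (f v), (hmemD2 _).mpr (hPend ▸ ⟨v, hv, rfl⟩), ?_⟩
        exact hf1 v hv
      · obtain ⟨l, hl, hlleaf⟩ := TOCAux.internal_leaf_nbr hT hn hediam hdiam2 hv
        refine ⟨Sum.inr (f l), (hmemD2 _).mpr (hPend ▸ ⟨l, hlleaf, rfl⟩), ?_⟩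
        have h1 := TOCAux.pendant_edge_eq hl (f l).2 (hf1 l hlleaf)
        show v ∈ ((f l : T.edgeSet) : Sym2 V)
        rw [h1]
        exact Sym2.mem_mk_right l v
    · obtain ⟨es, hes⟩ := e
      induction es using Sym2.ind with
      | _ x y =>
      have hadj : T.Adj x y := T.mem_edgeSet.mp hes
      by_cases hx : x ∈ leafSet T
      · exact ⟨Sum.inl x, (hmemD1 _).mpr hx, Sym2.mem_mk_left x y⟩
      · by_cases hy : y ∈ leafSet T
        · exact ⟨Sum.inl y, (hmemD1 _).mpr hy, Sym2.mem_mk_right x y⟩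
        · obtain ⟨l, hl, hlleaf⟩ := TOCAux.internal_leaf_nbr hT hn hediam hdiam2 hx
          refine ⟨Sum.inr (f l), (hmemD2 _).mpr (hPend ▸ ⟨l, hlleaf, rfl⟩), ?_, x, ?_, ?_⟩
          · intro hEq
            have hlv : l ∈ ((f l : T.edgeSet) : Sym2 V) := hf1 l hlleaf
            rw [← hEq] at hlv
            simp only [Sym2.mem_iff] at hlv
            rcases hlv with rfl | rfl
            · exact hx hlleaf
            · exact hy hlleaf
          · exact Sym2.mem_mk_left x y
          · have h1 := TOCAux.pendant_edge_eq hl (f l).2 (hf1 l hlleaf)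
            rw [h1]
            exact Sym2.mem_mk_right l x
  -- outer connectivity of D
  have hDconn : ((middleGraph T).induce Dᶜ).Connected := by
    rcases TOCAux.internal_cases hT hn hediam hdiam2 with ⟨c, hc, huniq⟩ |
      ⟨c, d, hcd, hc, hd, huniq⟩
    · have hDc : Dᶜ = {Sum.inl c} := by
        ext z
        simp only [Set.mem_compl_iff, Set.mem_singleton_iff]
        constructor
        · rcases z with v | e
          · intro hz
            rw [hmemD1] at hz
            rw [huniq v hz]
          · intro hz
            exfalso
            rw [hmemD2] at hz
            obtain ⟨es, hes⟩ := e
            induction es using Sym2.ind with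
            | _ x y =>
            have hadj : T.Adj x y := T.mem_edgeSet.mp hes
            have hx : x ∉ leafSet T := fun h => hz ⟨x, h, Sym2.mem_mk_left x y⟩
            have hy : y ∉ leafSet T := fun h => hz ⟨y, h, Sym2.mem_mk_right x y⟩
            have := (huniq x hx).trans (huniq y hy).symm
            exact hadj.ne this
        · rintro rfl
          rw [hmemD1]
          exact hc
      rw [hDc]
      have hmem : Sum.inl c ∈ ({Sum.inl c} : Set (V ⊕ T.edgeSet)) := rfl
      refine @SimpleGraph.Connected.mk _ _ ?_ ⟨⟨_, hmem⟩⟩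
      rintro ⟨a, ha⟩ ⟨b, hb⟩
      simp only [Set.mem_singleton_iff] at ha hb
      have heq : (⟨a, ha⟩ : ↥({Sum.inl c} : Set (V ⊕ T.edgeSet))) = ⟨b, hb⟩ :=
        Subtype.ext (ha.trans hb.symm)
      rw [heq]
    · have hcd' : s(c, d) ∈ T.edgeSet := T.mem_edgeSet.mpr hcd
      have hDc : Dᶜ = {Sum.inl c, Sum.inl d, Sum.inr ⟨s(c, d), hcd'⟩} := by
        ext z
        simp only [Set.mem_compl_iff, Set.mem_insert_iff, Set.mem_singleton_iff]
        constructor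
        · rcases z with v | e
          · intro hz
            rw [hmemD1] at hz
            rcases huniq v hz with rfl | rfl
            · exact Or.inl rfl
            · exact Or.inr (Or.inl rfl)
          · intro hz
            rw [hmemD2] at hz
            obtain ⟨es, hes⟩ := e
            induction es using Sym2.ind with
            | _ x y =>
            have hadj : T.Adj x y := T.mem_edgeSet.mp hes
            have hx : x ∉ leafSet T := fun h => hz ⟨x, h, Sym2.mem_mk_left x y⟩
            have hy : y ∉ leafSet T := fun h => hz ⟨y, h, Sym2.mem_mk_right x y⟩
            refine Or.inr (Or.inr ?_)
            simp only [Sum.inr.injEq, Subtype.ext_iff]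
            rcases huniq x hx with rfl | rfl <;> rcases huniq y hy with rfl | rfl
            · exact (hadj.ne rfl).elim
            · rfl
            · exact Sym2.eq_swap
            · exact (hadj.ne rfl).elim
        · intro hz
          rcases hz with rfl | rfl | rfl
          · rw [hmemD1]; exact hc
          · rw [hmemD1]; exact hd
          · rw [hmemD2]
            rintro ⟨l, hl, hle⟩
            simp only [Sym2.mem_iff] at hle
            rcases hle with rfl | rfl
            · exact hc hl
            · exact hd hl
      rw [hDc]
      set S : Set (V ⊕ T.edgeSet) := {Sum.inl c, Sum.inl d, Sum.inr ⟨s(c, d), hcd'⟩} with hSdef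
      have hmc : Sum.inl c ∈ S := Or.inl rfl
      have hmd : Sum.inl d ∈ S := Or.inr (Or.inl rfl)
      have hme : Sum.inr ⟨s(c, d), hcd'⟩ ∈ S := Or.inr (Or.inr rfl)
      have key : ∀ z (hz : z ∈ S),
          ((middleGraph T).induce S).Reachable ⟨z, hz⟩ ⟨Sum.inr ⟨s(c, d), hcd'⟩, hme⟩ := by
        intro z hz
        rcases hz with rfl | rfl | rfl
        · exact SimpleGraph.Adj.reachable (Sym2.mem_mk_left c d)
        · exact SimpleGraph.Adj.reachable (Sym2.mem_mk_right c d)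
        · exact SimpleGraph.Reachable.refl _
      refine @SimpleGraph.Connected.mk _ _ ?_ ⟨⟨_, hmc⟩⟩
      rintro ⟨a, ha⟩ ⟨b, hb⟩
      exact (key a ha).trans (key b hb).symm
  -- lower bound
  have hlb : ∀ k ∈ {k | ∃ D' : Set (V ⊕ T.edgeSet),
      IsTOCDomSet (middleGraph T) D' ∧ D'.ncard = k}, 2 * (leafSet T).ncard ≤ k := by
    rintro k ⟨D', ⟨htot', hconn'⟩, rfl⟩
    have hpend : ∀ e ∈ Pend, Sum.inr e ∈ D' := by
      rintro e ⟨l, hl, hle⟩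
      obtain ⟨u, hu, hadj⟩ := htot' (Sum.inl l)
      rcases u with w | e'
      · exact hadj.elim
      · obtain ⟨v1, hv1⟩ := id hl
        have h1 : (e' : Sym2 V) = s(l, v1) := TOCAux.pendant_edge_eq hv1 e'.2 hadj
        have h2 : (e : Sym2 V) = s(l, v1) := TOCAux.pendant_edge_eq hv1 e.2 hle
        have he : e' = e := Subtype.ext (h1.trans h2.symm)
        rwa [he] at hu
    have htotsum : D'.ncard + (D'ᶜ).ncard = Fintype.card V + Nat.card T.edgeSet := by
      rw [Set.ncard_add_ncard_compl D' (Set.toFinite _) (Set.toFinite _), Nat.card_sum,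
        Nat.card_eq_fintype_card]
    have hLn : (leafSet T).ncard < Fintype.card V := by
      obtain ⟨c, hc⟩ := TOCAux.internal_nonempty hT hn
      have hss : leafSet T ⊂ Set.univ :=
        Set.ssubset_univ_iff.mpr (fun h => hc (h ▸ Set.mem_univ c))
      have := Set.ncard_lt_ncard hss Set.finite_univ
      rwa [Set.ncard_univ, Nat.card_eq_fintype_card] at this
    have hLm : (leafSet T).ncard ≤ Nat.card T.edgeSet := by
      rw [← hPcard]
      have := Set.ncard_le_ncard (Set.subset_univ Pend) Set.finite_univ
      rwa [Set.ncard_univ] at this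
    by_cases hcase : ∃ l ∈ leafSet T, Sum.inl l ∈ D'ᶜ
    · obtain ⟨l, hl, hlS⟩ := hcase
      have key : ∀ (w : ↥(D'ᶜ))
          (_q : ((middleGraph T).induce D'ᶜ).Walk ⟨Sum.inl l, hlS⟩ w),
          w.val = Sum.inl l := by
        rintro w q
        cases q with
        | nil => rfl
        | @cons _ w' _ h q' =>
          exfalso
          obtain ⟨zv, hzv⟩ := w'
          have hA : (middleGraph T).Adj (Sum.inl l) zv := h
          rcases zv with w2 | e'
          · exact hA
          · exact hzv (hpend e' ⟨l, hl, hA⟩)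
      have hSsing : D'ᶜ = {Sum.inl l} := by
        apply Set.eq_singleton_iff_unique_mem.mpr
        refine ⟨hlS, fun z hz => ?_⟩
        obtain ⟨q⟩ := hconn'.preconnected ⟨Sum.inl l, hlS⟩ ⟨z, hz⟩
        exact key _ q
      rw [hSsing, Set.ncard_singleton] at htotsum
      omega
    · push_neg at hcase
      have hsub : D'ᶜ ⊆ (Sum.inl '' (leafSet T)ᶜ) ∪ (Sum.inr '' Pendᶜ) := by
        rintro (v | e) hz
        · exact Or.inl ⟨v, fun h => (hcase v h) hz, rfl⟩
        · exact Or.inr ⟨e, fun h => hz (hpend e h), rfl⟩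
      have h3 : (D'ᶜ).ncard ≤ ((leafSet T)ᶜ).ncard + (Pendᶜ).ncard := by
        calc (D'ᶜ).ncard ≤ ((Sum.inl '' (leafSet T)ᶜ) ∪ (Sum.inr '' Pendᶜ)).ncard :=
              Set.ncard_le_ncard hsub (Set.toFinite _)
          _ ≤ (Sum.inl '' (leafSet T)ᶜ).ncard + (Sum.inr '' Pendᶜ).ncard :=
              Set.ncard_union_le _ _
          _ = ((leafSet T)ᶜ).ncard + (Pendᶜ).ncard := by
              rw [Set.ncard_image_of_injective _ Sum.inl_injective,
                Set.ncard_image_of_injective _ Sum.inr_injective]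
      have h4 := Set.ncard_add_ncard_compl (leafSet T) (Set.toFinite _) (Set.toFinite _)
      have h5 := Set.ncard_add_ncard_compl Pend (Set.toFinite _) (Set.toFinite _)
      rw [Nat.card_eq_fintype_card] at h4
      rw [hPcard] at h5
      omega
  have hmem2L : 2 * (leafSet T).ncard ∈ {k | ∃ D' : Set (V ⊕ T.edgeSet),
      IsTOCDomSet (middleGraph T) D' ∧ D'.ncard = k} := ⟨D, ⟨htot, hDconn⟩, hDcard⟩
  exact le_antisymm (Nat.sInf_le hmem2L) (le_csInf ⟨_, hmem2L⟩ hlb)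
end

section
/- For any connected graph G of order n ≥ 2, γ_tc(M(G ∘ K_1)) = 2n, where G ∘ K_1 is the corona of G. -/
open SimpleGraph

section Dev
variable {V : Type*} (G : SimpleGraph V)

/-- pendant edge of the corona -/
def pe (a : V) : (corona G).edgeSet :=
  ⟨s(Sum.inl a, Sum.inr a), by rw [SimpleGraph.mem_edgeSet]; rfl⟩

variable {G}

lemma pe_inj : Function.Injective (pe G) := by
  intro a b h
  have : Sum.inr a ∈ (pe G b : Sym2 (V ⊕ V)) := by rw [← h]; simp [pe]
  simpa [pe] using this

lemma edge_of_inr_mem (e : (corona G).edgeSet) (a : V)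
    (h : Sum.inr a ∈ (e : Sym2 (V ⊕ V))) : e = pe G a := by
  obtain ⟨s, hs⟩ := e
  induction s using Sym2.ind with
  | _ x y =>
    rw [SimpleGraph.mem_edgeSet] at hs
    apply Subtype.ext
    rw [Sym2.mem_iff] at h
    rcases x with x|x <;> rcases y with y|y
    · rcases h with h|h <;> exact absurd h (by simp)
    · have : x = y := hs
      rcases h with h|h
      · exact absurd h (by simp)
      · cases Sum.inr.inj h; cases this; rfl
    · have : x = y := hs
      rcases h with h|h
      · cases Sum.inr.inj h; cases this; exact Sym2.eq_swap
      · exact absurd h (by simp)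
    · exact absurd hs (by simp [corona])

lemma edge_has_inl (e : (corona G).edgeSet) : ∃ a, Sum.inl a ∈ (e : Sym2 (V ⊕ V)) := by
  obtain ⟨s, hs⟩ := e
  induction s using Sym2.ind with
  | _ x y =>
    rw [SimpleGraph.mem_edgeSet] at hs
    rcases x with x|x <;> rcases y with y|y
    · exact ⟨x, by simp⟩
    · exact ⟨x, by simp⟩
    · exact ⟨y, by simp⟩
    · exact absurd hs (by simp [corona])

/-- unique neighbour of a pendant vertex in the middle graph -/
lemma pendant_adj {a : V} {x : (V ⊕ V) ⊕ (corona G).edgeSet}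
    (h : (middleGraph (corona G)).Adj (Sum.inl (Sum.inr a)) x) :
    x = Sum.inr (pe G a) := by
  rcases x with v|e
  · exact absurd h (by simp [middleGraph])
  · have : Sum.inr a ∈ (e : Sym2 (V ⊕ V)) := h
    exact congrArg Sum.inr (edge_of_inr_mem e a this)

lemma exists_adj_of_reachable {α : Type*} {H : SimpleGraph α} {u v : α}
    (h : H.Reachable u v) (hne : u ≠ v) : ∃ z, H.Adj u z := by
  obtain ⟨w⟩ := h
  cases w with
  | nil => exact absurd rfl hne
  | cons h _ => exact ⟨_, h⟩

lemma pe_ne_graphEdge {a b c : V} (hab : G.Adj a b) :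
    (⟨s(Sum.inl a, Sum.inl b), hab⟩ : (corona G).edgeSet) ≠ pe G c := by
  intro h
  have h2 : Sum.inr c ∈ (s(Sum.inl a, Sum.inl b) : Sym2 (V ⊕ V)) := by
    have hv : (pe G c : Sym2 (V ⊕ V)) = s(Sum.inl a, Sum.inl b) := by rw [← h]
    rw [← hv]; simp [pe]
  simp at h2

end Dev

theorem stmt14 {V : Type*} [Fintype V] (G : SimpleGraph V) (hG : G.Connected)
    (hn : 2 ≤ Fintype.card V) :
    tocDomNum (middleGraph (corona G)) = 2 * Fintype.card V := by
  classical
  set M := middleGraph (corona G) with hM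
  -- the standard 2n-set: pendant edges and pendant vertices
  set f : V ⊕ V → (V ⊕ V) ⊕ (corona G).edgeSet :=
    fun x => match x with
      | Sum.inl a => Sum.inr (pe G a)
      | Sum.inr a => Sum.inl (Sum.inr a) with hf
  have hfinj : Function.Injective f := by
    rintro (a|a) (b|b) h <;> simp only [hf] at h
    · exact congrArg Sum.inl (pe_inj (Sum.inr.inj h))
    · cases h
    · cases h
    · exact congrArg Sum.inr (Sum.inr.inj (Sum.inl.inj h))
  have hcard2n : ∀ h : V ⊕ V → (V ⊕ V) ⊕ (corona G).edgeSet, Function.Injective h →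
      (Set.range h).ncard = 2 * Fintype.card V := by
    intro h hinj
    rw [← Nat.card_coe_set_eq, Nat.card_range_of_injective hinj,
      Nat.card_eq_fintype_card, Fintype.card_sum, two_mul]
  -- upper bound: range f is a TOC dominating set
  have hub : IsTOCDomSet M (Set.range f) := by
    constructor
    · rintro ((a|a)|e)
      · exact ⟨Sum.inr (pe G a), ⟨Sum.inl a, rfl⟩, by simp [hM, middleGraph, pe]⟩
      · exact ⟨Sum.inr (pe G a), ⟨Sum.inl a, rfl⟩, by simp [hM, middleGraph, pe]⟩
      · obtain ⟨a, ha⟩ := edge_has_inl e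
        by_cases hpe : e = pe G a
        · exact ⟨Sum.inl (Sum.inr a), ⟨Sum.inr a, rfl⟩, by
            show Sum.inr a ∈ (e : Sym2 (V ⊕ V)); rw [hpe]; simp [pe]⟩
        · exact ⟨Sum.inr (pe G a), ⟨Sum.inl a, rfl⟩,
            ⟨hpe, Sum.inl a, ha, by simp [pe]⟩⟩
    · -- connectivity of complement
      have hmemC1 : ∀ a : V, Sum.inl (Sum.inl a) ∈ (Set.range f)ᶜ := by
        rintro a ⟨(b|b), hb⟩ <;> simp [hf] at hb
      have hmemC2 : ∀ (a b : V) (hab : G.Adj a b),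
          (Sum.inr (⟨s(Sum.inl a, Sum.inl b), hab⟩ : (corona G).edgeSet) :
            (V ⊕ V) ⊕ (corona G).edgeSet) ∈ (Set.range f)ᶜ := by
        rintro a b hab ⟨(c|c), hc⟩ <;> simp only [hf] at hc
        · exact pe_ne_graphEdge hab (Sum.inr.inj hc).symm
        · cases hc
      have step : ∀ a c : V, G.Adj a c →
          (M.induce (Set.range f)ᶜ).Reachable ⟨Sum.inl (Sum.inl a), hmemC1 a⟩
            ⟨Sum.inl (Sum.inl c), hmemC1 c⟩ := by
        intro a c hac
        have h1 : (M.induce (Set.range f)ᶜ).Adj ⟨Sum.inl (Sum.inl a), hmemC1 a⟩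
            ⟨Sum.inr ⟨s(Sum.inl a, Sum.inl c), hac⟩, hmemC2 a c hac⟩ := by
          show Sum.inl a ∈ (s(Sum.inl a, Sum.inl c) : Sym2 (V ⊕ V)); simp
        have h2 : (M.induce (Set.range f)ᶜ).Adj
            ⟨Sum.inr ⟨s(Sum.inl a, Sum.inl c), hac⟩, hmemC2 a c hac⟩
            ⟨Sum.inl (Sum.inl c), hmemC1 c⟩ := by
          show Sum.inl c ∈ (s(Sum.inl a, Sum.inl c) : Sym2 (V ⊕ V)); simp
        exact (h1.reachable).trans h2.reachable
      have reach : ∀ a b : V, (M.induce (Set.range f)ᶜ).Reachable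
          ⟨Sum.inl (Sum.inl a), hmemC1 a⟩ ⟨Sum.inl (Sum.inl b), hmemC1 b⟩ := by
        intro a b
        obtain ⟨w⟩ := hG.preconnected a b
        induction w with
        | nil => exact Reachable.refl _
        | cons h _ ih => exact (step _ _ h).trans ih
      have anchor : ∀ z : ((Set.range f)ᶜ : Set _), ∃ a,
          (M.induce (Set.range f)ᶜ).Reachable z ⟨Sum.inl (Sum.inl a), hmemC1 a⟩ := by
        rintro ⟨((a|a)|e), hz⟩
        · exact ⟨a, Reachable.refl _⟩
        · exact absurd ⟨Sum.inr a, rfl⟩ hz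
        · obtain ⟨a, ha⟩ := edge_has_inl e
          exact ⟨a, Adj.reachable (by exact ha)⟩
      have hV : Nonempty V := Fintype.card_pos_iff.mp (by omega)
      rw [connected_iff]
      refine ⟨fun x y => ?_, ⟨⟨Sum.inl (Sum.inl (Classical.arbitrary V)), hmemC1 _⟩⟩⟩
      obtain ⟨a, hx⟩ := anchor x
      obtain ⟨b, hy⟩ := anchor y
      exact hx.trans ((reach a b).trans hy.symm)
  -- lower bound
  have hlb : ∀ k ∈ {k | ∃ D, IsTOCDomSet M D ∧ D.ncard = k}, 2 * Fintype.card V ≤ k := by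
    rintro k ⟨D, ⟨hdom, hconn⟩, rfl⟩
    -- pendant edges must be in D
    have hpe : ∀ a : V, Sum.inr (pe G a) ∈ D := by
      intro a
      obtain ⟨u, hu, hadj⟩ := hdom (Sum.inl (Sum.inr a))
      rwa [pendant_adj hadj] at hu
    have hmono : ∀ g : V ⊕ V → (V ⊕ V) ⊕ (corona G).edgeSet, Function.Injective g →
        Set.range g ⊆ D → 2 * Fintype.card V ≤ D.ncard := by
      intro g hinj hsub
      rw [← hcard2n g hinj]
      exact Set.ncard_le_ncard hsub (Set.toFinite D)
    by_cases hall : ∀ a : V, Sum.inl (Sum.inr a) ∈ D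
    · refine hmono f hfinj ?_
      rintro x ⟨(a|a), rfl⟩
      · exact hpe a
      · exact hall a
    · push_neg at hall
      obtain ⟨a₀, ha₀⟩ := hall
      have hiso : ∀ a : V, Sum.inl (Sum.inl a) ∈ D := by
        intro a
        by_contra hq
        have hp : (Sum.inl (Sum.inr a₀) : (V ⊕ V) ⊕ (corona G).edgeSet) ∈ Dᶜ := ha₀
        have hq' : (Sum.inl (Sum.inl a) : (V ⊕ V) ⊕ (corona G).edgeSet) ∈ Dᶜ := hq
        have hr := hconn.preconnected ⟨_, hp⟩ ⟨_, hq'⟩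
        obtain ⟨z, hz⟩ := exists_adj_of_reachable hr (by simp)
        have hadj : M.Adj (Sum.inl (Sum.inr a₀)) z.val := hz
        have := pendant_adj hadj
        exact z.prop (by rw [this]; exact hpe a₀)
      set g : V ⊕ V → (V ⊕ V) ⊕ (corona G).edgeSet :=
        fun x => match x with
          | Sum.inl a => Sum.inr (pe G a)
          | Sum.inr a => Sum.inl (Sum.inl a) with hg
      have hginj : Function.Injective g := by
        rintro (a|a) (b|b) h <;> simp only [hg] at h
        · exact congrArg Sum.inl (pe_inj (Sum.inr.inj h))
        · cases h
        · cases h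
        · exact congrArg Sum.inr (Sum.inl.inj (Sum.inl.inj h))
      refine hmono g hginj ?_
      rintro x ⟨(a|a), rfl⟩
      · exact hpe a
      · exact hiso a
  -- conclude
  have hmem : 2 * Fintype.card V ∈ {k | ∃ D, IsTOCDomSet M D ∧ D.ncard = k} :=
    ⟨Set.range f, hub, hcard2n f hfinj⟩
  exact le_antisymm (Nat.sInf_le hmem) (le_csInf ⟨_, hmem⟩ hlb)
end
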